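/- arXiv:1201.5156 — 12 statements merged into one kernel-verified Lean document; each statement's English description precedes it below -/
import Mathlib

section
/- There is no positive function φ : ℕ → (0,∞) that serves as a universal boundary test for positive series with monotone terms; that is, there is no function φ with φ(n) > 0 for all n such that for every nonincreasing sequence (aₙ) of positive real numbers, the series ∑ aₙ converges if and only if φ(n)·aₙ → 0 as n → ∞. -/
open Filter Topology

/-- Running maximum of `1` and `φ`. -/
noncomputable def runMax (φ : ℕ → ℝ) : ℕ → ℝ
  | 0 => max 1 (φ 0)
  | n + 1 => max (runMax φ n) (φ (n + 1))

lemma runMax_one_le (φ : ℕ → ℝ) : ∀ n, 1 ≤ runMax φ n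
  | 0 => le_max_left _ _
  | n + 1 => le_trans (runMax_one_le φ n) (le_max_left _ _)

lemma runMax_pos (φ : ℕ → ℝ) (n : ℕ) : 0 < runMax φ n :=
  lt_of_lt_of_le one_pos (runMax_one_le φ n)

lemma le_runMax (φ : ℕ → ℝ) : ∀ n, φ n ≤ runMax φ n
  | 0 => le_max_right _ _
  | n + 1 => le_max_right _ _

lemma runMax_mono (φ : ℕ → ℝ) : Monotone (runMax φ) := by
  apply monotone_nat_of_le_succ
  intro n
  exact le_max_left _ _

/-- Abel's first lemma: there is no positive function `φ` such that, for every
nonincreasing sequence of positive reals `a`, the series `∑ a n` converges iff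
`φ n * a n → 0`. -/
theorem no_universal_boundary_test :
    ¬ ∃ φ : ℕ → ℝ, (∀ n, 0 < φ n) ∧
      ∀ a : ℕ → ℝ, (∀ n, 0 < a n) → Antitone a →
        (Summable a ↔ Tendsto (fun n => φ n * a n) atTop (𝓝 0)) := by
  rintro ⟨φ, hφ, h⟩
  set M : ℕ → ℝ := runMax φ with hM
  set m : ℕ → ℝ := fun n => (M n)⁻¹ with hm
  have hMpos : ∀ n, 0 < M n := runMax_pos φ
  have hm_pos : ∀ n, 0 < m n := fun n => inv_pos.mpr (hMpos n)
  have hm_anti : Antitone m := fun i j hij =>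
    inv_anti₀ (hMpos i) (runMax_mono φ hij)
  have hφm : ∀ n, φ n * m n ≤ 1 := by
    intro n
    have h1 : φ n * m n ≤ M n * m n :=
      mul_le_mul_of_nonneg_right (le_runMax φ n) (hm_pos n).le
    have h2 : M n * m n = 1 := mul_inv_cancel₀ (hMpos n).ne'
    linarith
  have hφm_pos : ∀ n, 0 < φ n * m n := fun n => mul_pos (hφ n) (hm_pos n)
  -- Step A: ∑ m diverges.
  have hms : ¬ Summable m := by
    by_cases hinf : ∀ c, 0 < c → ∃ n, m n < c
    · -- infinitely many indices where φ n * m n = 1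
      have key : ∀ N, ∃ n, N ≤ n ∧ φ n * m n = 1 := by
        intro N
        obtain ⟨n0, hn0⟩ := hinf (m N) (hm_pos N)
        classical
        have hex : ∃ n, m n < m N := ⟨n0, hn0⟩
        set n := Nat.find hex with hn
        have hlt : m n < m N := Nat.find_spec hex
        have hNn : N ≤ n := by
          by_contra hc
          push_neg at hc
          exact absurd (hm_anti hc.le) (not_le.mpr hlt)
        have hnpos : n ≠ 0 := by
          intro h0
          have := hm_anti (Nat.zero_le N)
          rw [h0] at hlt
          linarith
        obtain ⟨k, hk⟩ := Nat.exists_eq_succ_of_ne_zero hnpos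
        have hkmin : ¬ m k < m N := Nat.find_min hex (by omega)
        push_neg at hkmin
        have hMlt : M k < M n := by
          have h1 : m n < m k := lt_of_lt_of_le hlt hkmin
          have := inv_strictAnti₀ (hm_pos n) h1
          simpa [hm, inv_inv] using this
        have hMeq : M n = φ n := by
          rw [hk] at hMlt ⊢
          have : M (k + 1) = max (M k) (φ (k + 1)) := rfl
          rw [this] at hMlt ⊢
          rcases max_cases (M k) (φ (k + 1)) with ⟨he, _⟩ | ⟨he, _⟩
          · rw [he] at hMlt; linarith
          · exact he
        refine ⟨n, hNn, ?_⟩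
        rw [hm]
        simp only []
        rw [hMeq]
        exact mul_inv_cancel₀ (hφ n).ne'
      have hnt : ¬ Tendsto (fun n => φ n * m n) atTop (𝓝 0) := by
        intro ht
        have h1 : ∀ᶠ n in atTop, φ n * m n < 1 :=
          ht.eventually_lt_const one_pos
        rw [eventually_atTop] at h1
        obtain ⟨N, hN⟩ := h1
        obtain ⟨n, hn1, hn2⟩ := key N
        exact absurd hn2 (ne_of_lt (hN n hn1))
      exact fun hs => hnt ((h m hm_pos hm_anti).mp hs)
    · push_neg at hinf
      obtain ⟨c, hc, hcm⟩ := hinf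
      intro hs
      have := hs.tendsto_atTop_zero
      have h1 : ∀ᶠ n in atTop, m n < c := this.eventually_lt_const hc
      rw [eventually_atTop] at h1
      obtain ⟨N, hN⟩ := h1
      exact absurd (hcm N) (not_le.mpr (hN N le_rfl))
  -- Step B: Abel–Dini construction.
  set S : ℕ → ℝ := fun n => ∑ k ∈ Finset.range (n + 1), m k with hS
  have hS_pos : ∀ n, 0 < S n := by
    intro n
    apply Finset.sum_pos (fun k _ => hm_pos k)
    exact ⟨0, Finset.mem_range.mpr (Nat.succ_pos n)⟩
  have hS_mono : Monotone S := by
    apply monotone_nat_of_le_succ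
    intro n
    rw [hS]
    simp only []
    rw [Finset.sum_range_succ (f := m) (n := n + 1)]
    linarith [hm_pos (n + 1)]
  have hS_top : Tendsto S atTop atTop := by
    have h0 : Tendsto (fun n => ∑ k ∈ Finset.range n, m k) atTop atTop :=
      (not_summable_iff_tendsto_nat_atTop_of_nonneg (fun n => (hm_pos n).le)).mp hms
    exact h0.comp (tendsto_add_atTop_nat 1)
  set c : ℕ → ℝ := fun n => m n / S n with hc
  have hc_pos : ∀ n, 0 < c n := fun n => div_pos (hm_pos n) (hS_pos n)
  have hc_anti : Antitone c := fun i j hij =>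
    div_le_div₀ (hm_pos i).le (hm_anti hij) (hS_pos i) (hS_mono hij)
  have hφc : Tendsto (fun n => φ n * c n) atTop (𝓝 0) := by
    have hub : ∀ n, φ n * c n ≤ (S n)⁻¹ := by
      intro n
      have : φ n * c n = (φ n * m n) / S n := by rw [hc]; ring
      rw [this]
      rw [div_le_iff₀ (hS_pos n)]
      rw [inv_mul_cancel₀ (hS_pos n).ne']
      exact hφm n
    have hlb : ∀ n, 0 ≤ φ n * c n := fun n => (mul_pos (hφ n) (hc_pos n)).le
    have hinv : Tendsto (fun n => (S n)⁻¹) atTop (𝓝 0) := hS_top.inv_tendsto_atTop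
    exact tendsto_of_tendsto_of_tendsto_of_le_of_le tendsto_const_nhds hinv hlb hub
  have hcs : Summable c := (h c hc_pos hc_anti).mpr hφc
  -- derive a contradiction from summability of c
  set T : ℝ := ∑' n, c n with hT
  have hpart : Tendsto (fun n => ∑ k ∈ Finset.range n, c k) atTop (𝓝 T) :=
    hcs.hasSum.tendsto_sum_nat
  have h1 : ∀ᶠ n in atTop, T - 1/2 < ∑ k ∈ Finset.range n, c k :=
    hpart.eventually_const_lt (by linarith)
  rw [eventually_atTop] at h1
  obtain ⟨N, hN⟩ := h1
  have hN1 : T - 1/2 < ∑ k ∈ Finset.range (N + 1), c k := hN (N + 1) (by omega)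
  -- choose M with S M > 2 * S N and M ≥ N + 1
  have h2 : ∀ᶠ n in atTop, 2 * S N < S n := hS_top.eventually_gt_atTop _
  rw [eventually_atTop] at h2
  obtain ⟨M0, hM0⟩ := h2
  set Mi : ℕ := max M0 (N + 1) with hMi
  have hSM : 2 * S N < S Mi := hM0 Mi (le_max_left _ _)
  have hNMi : N + 1 ≤ Mi := le_max_right _ _
  -- the tail sum of m telescopes
  have hsplit_m : ∑ k ∈ Finset.range (N + 1), m k + ∑ k ∈ Finset.Ico (N + 1) (Mi + 1), m k
      = ∑ k ∈ Finset.range (Mi + 1), m k := by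
    rw [Finset.range_eq_Ico, Finset.range_eq_Ico]
    exact Finset.sum_Ico_consecutive m (by omega) (by omega)
  have hIco_m : ∑ k ∈ Finset.Ico (N + 1) (Mi + 1), m k = S Mi - S N := by
    have : S N + ∑ k ∈ Finset.Ico (N + 1) (Mi + 1), m k = S Mi := hsplit_m
    linarith
  -- lower bound for the tail sum of c
  have hIco_c : (S Mi - S N) / S Mi ≤ ∑ k ∈ Finset.Ico (N + 1) (Mi + 1), c k := by
    have hle : ∀ k ∈ Finset.Ico (N + 1) (Mi + 1), m k / S Mi ≤ c k := by
      intro k hk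
      rw [Finset.mem_Ico] at hk
      have hkM : k ≤ Mi := by omega
      exact div_le_div_of_nonneg_left (hm_pos k).le (hS_pos k) (hS_mono hkM)
    calc (S Mi - S N) / S Mi = (∑ k ∈ Finset.Ico (N + 1) (Mi + 1), m k) / S Mi := by
          rw [hIco_m]
      _ = ∑ k ∈ Finset.Ico (N + 1) (Mi + 1), m k / S Mi := by rw [Finset.sum_div]
      _ ≤ ∑ k ∈ Finset.Ico (N + 1) (Mi + 1), c k := Finset.sum_le_sum hle
  have hhalf : 1/2 < (S Mi - S N) / S Mi := by
    rw [lt_div_iff₀ (hS_pos Mi)]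
    linarith
  -- upper bound for the tail sum of c
  have hsplit_c : ∑ k ∈ Finset.range (N + 1), c k + ∑ k ∈ Finset.Ico (N + 1) (Mi + 1), c k
      = ∑ k ∈ Finset.range (Mi + 1), c k := by
    rw [Finset.range_eq_Ico, Finset.range_eq_Ico]
    exact Finset.sum_Ico_consecutive c (by omega) (by omega)
  have hub : ∑ k ∈ Finset.range (Mi + 1), c k ≤ T :=
    Summable.sum_le_tsum (Finset.range (Mi + 1)) (fun i _ => (hc_pos i).le) hcs
  linarith
end

section
/- If (aₙ)ₙ≥1 is a sequence of positive real numbers such that the series ∑ aₙ diverges, and Sₙ = a₁ + a₂ + ⋯ + aₙ denotes its partial sums, then the series ∑ (aₙ / Sₙ) also diverges. -/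
open Filter Topology

/-- Abel's second lemma: if `∑ a n` is a divergent positive series with partial
sums `S n = a 0 + ⋯ + a n`, then `∑ a n / S n` is also divergent. -/
theorem abel_divergent_quotient (a : ℕ → ℝ) (ha : ∀ n, 0 < a n)
    (hdiv : ¬ Summable a) :
    ¬ Summable (fun n => a n / ∑ k ∈ Finset.range (n + 1), a k) := by
  set S : ℕ → ℝ := fun n => ∑ k ∈ Finset.range (n + 1), a k with hS
  have hSpos : ∀ n, 0 < S n := fun n =>
    Finset.sum_pos (fun i _ => ha i) ⟨0, Finset.mem_range.2 (Nat.succ_pos n)⟩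
  have hSmono : Monotone S := by
    intro i j hij
    exact Finset.sum_le_sum_of_subset_of_nonneg
      (Finset.range_subset_range.2 (by omega)) (fun k _ _ => (ha k).le)
  have hStop : Tendsto S atTop atTop := by
    have h1 : Tendsto (fun n => ∑ k ∈ Finset.range n, a k) atTop atTop := by
      rwa [← not_summable_iff_tendsto_nat_atTop_of_nonneg (fun n => (ha n).le)]
    exact h1.comp (tendsto_add_atTop_nat 1)
  intro h
  set b : ℕ → ℝ := fun n => a n / S n with hb
  have hbnn : ∀ n, 0 ≤ b n := fun n => (div_pos (ha n) (hSpos n)).le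
  set T : ℝ := ∑' i, b i with hT
  have hP : Tendsto (fun n => ∑ i ∈ Finset.range n, b i) atTop (𝓝 T) :=
    h.hasSum.tendsto_sum_nat
  have hPle : ∀ n, ∑ i ∈ Finset.range n, b i ≤ T := fun n =>
    Summable.sum_le_tsum _ (fun i _ => hbnn i) h
  obtain ⟨N, hN⟩ : ∃ N, ∀ n ≥ N, T - 1/4 < ∑ i ∈ Finset.range n, b i := by
    have := hP.eventually (eventually_gt_nhds (by linarith : T - 1/4 < T))
    exact eventually_atTop.1 this
  set C : ℝ := ∑ k ∈ Finset.range N, a k with hC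
  have hCnn : 0 ≤ C := Finset.sum_nonneg fun k _ => (ha k).le
  obtain ⟨m, hmN, hm⟩ : ∃ m, N ≤ m ∧ 2 * C + 1 ≤ S m := by
    obtain ⟨m, h1, h2⟩ := ((eventually_ge_atTop N).and
      (hStop.eventually_ge_atTop (2 * C + 1))).exists
    exact ⟨m, h1, h2⟩
  -- lower bound on the block sum
  have hblock : 1 - C / S m ≤ (∑ i ∈ Finset.range (m + 1), b i) - ∑ i ∈ Finset.range N, b i := by
    have hsub : (∑ i ∈ Finset.range (m + 1), b i) - ∑ i ∈ Finset.range N, b i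
        = ∑ k ∈ Finset.Ico N (m + 1), b k :=
      (Finset.sum_Ico_eq_sub b (by omega)).symm
    rw [hsub]
    have h1 : ∑ k ∈ Finset.Ico N (m + 1), a k / S m ≤ ∑ k ∈ Finset.Ico N (m + 1), b k := by
      refine Finset.sum_le_sum fun k hk => ?_
      have hk' : k ≤ m := by have := (Finset.mem_Ico.1 hk).2; omega
      exact div_le_div_of_nonneg_left (ha k).le (hSpos k) (hSmono hk')
    have h2 : ∑ k ∈ Finset.Ico N (m + 1), a k / S m = (S m - C) / S m := by
      rw [← Finset.sum_div, Finset.sum_Ico_eq_sub a (by omega)]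
    have h3 : (S m - C) / S m = 1 - C / S m := by
      rw [sub_div, div_self (hSpos m).ne']
    rw [h2, h3] at h1
    exact h1
  have hChalf : C / S m < 1 / 2 := by
    rw [div_lt_iff₀ (hSpos m)]
    linarith
  have hlow := hN N le_rfl
  have hup := hPle (m + 1)
  linarith
end

section
/- If (aₙ)ₙ≥1 is a sequence of positive real numbers such that the series ∑ aₙ converges and the sequence (n·aₙ)ₙ≥1 is nonincreasing, then (n·ln n)·aₙ → 0 as n → ∞. -/
open Filter Topology

private lemma tail_tendsto (a : ℕ → ℝ) :
    Tendsto (fun N : ℕ => ∑' k, a (k + (N + 1))) atTop (𝓝 0) :=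
  (tendsto_sum_nat_add a).comp (tendsto_add_atTop_nat 1)

private lemma sum_le_tail (a : ℕ → ℝ) (ha : ∀ n, 0 < a n) (hsum : Summable a)
    (N n : ℕ) :
    ∑ i ∈ Finset.Ico (N + 1) (n + 1), a i ≤ ∑' k, a (k + (N + 1)) := by
  rw [Finset.sum_Ico_eq_sum_range]
  have hs : Summable fun k => a (k + (N + 1)) := (summable_nat_add_iff (N + 1)).2 hsum
  have := Summable.sum_le_tsum (Finset.range (n + 1 - (N + 1)))
    (fun i _ => (ha _).le) hs
  simpa [add_comm] using this

private lemma key_ineq (a : ℕ → ℝ) (ha : ∀ n, 0 < a n)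
    (hanti : ∀ m n : ℕ, 1 ≤ m → m ≤ n → (n : ℝ) * a n ≤ (m : ℝ) * a m)
    (hsum : Summable a) {N n : ℕ} (hN : 1 ≤ N) (hn : N ≤ n) :
    (n : ℝ) * a n * (∑ i ∈ Finset.Ico (N + 1) (n + 1), ((i : ℝ))⁻¹)
      ≤ ∑' k, a (k + (N + 1)) := by
  refine le_trans ?_ (sum_le_tail a ha hsum N n)
  rw [Finset.mul_sum]
  refine Finset.sum_le_sum fun i hi => ?_
  simp only [Finset.mem_Ico] at hi
  have hi1 : 1 ≤ i := le_trans (Nat.le_add_left 1 N) hi.1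
  have hipos : (0 : ℝ) < (i : ℝ) := by exact_mod_cast hi1
  have h := hanti i n hi1 (Nat.lt_succ_iff.mp hi.2)
  rw [mul_inv_le_iff₀ hipos, mul_comm (a i)]
  exact h

private lemma harmonic_diff (N n : ℕ) (h : N ≤ n) :
    ((harmonic n : ℝ)) - (harmonic N : ℝ)
      = ∑ i ∈ Finset.Ico (N + 1) (n + 1), ((i : ℝ))⁻¹ := by
  have h1 : ∀ m : ℕ, (harmonic m : ℝ) = ∑ i ∈ Finset.Ico 1 (m + 1), ((i : ℝ))⁻¹ := by
    intro m
    rw [harmonic_eq_sum_Icc]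
    push_cast
    rw [← Finset.Ico_add_one_right_eq_Icc]
  rw [h1, h1, sub_eq_iff_eq_add']
  exact (Finset.sum_Ico_consecutive _ (Nat.succ_le_succ (Nat.zero_le N))
    (Nat.succ_le_succ h)).symm

/-- If `∑ a n` is a convergent positive series and `(n * a n)` is nonincreasing
(for `n ≥ 1`), then `(n * log n) * a n → 0`. -/
theorem olivier_log (a : ℕ → ℝ) (ha : ∀ n, 0 < a n)
    (hanti : ∀ m n : ℕ, 1 ≤ m → m ≤ n → (n : ℝ) * a n ≤ (m : ℝ) * a m)
    (hsum : Summable a) :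
    Tendsto (fun n : ℕ => ((n : ℝ) * Real.log n) * a n) atTop (𝓝 0) := by
  set T : ℕ → ℝ := fun N => ∑' k, a (k + (N + 1)) with hT
  have hTt : Tendsto T atTop (𝓝 0) := tail_tendsto a
  -- Step 1 : Olivier's theorem, n * a n → 0
  have holiv : Tendsto (fun n : ℕ => (n : ℝ) * a n) atTop (𝓝 0) := by
    have hdiv : Tendsto (fun n : ℕ => n / 2) atTop atTop := by
      refine tendsto_atTop.2 fun b => eventually_atTop.2 ⟨2 * b, fun n hn => ?_⟩
      omega
    have hbound : ∀ n : ℕ, 2 ≤ n → (n : ℝ) * a n ≤ 2 * T (n / 2) := by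
      intro n hn
      set N := n / 2 with hNdef
      have hN1 : 1 ≤ N := by omega
      have hNn : N ≤ n := Nat.div_le_self n 2
      have hcard : ∀ i ∈ Finset.Ico (N + 1) (n + 1), a n ≤ a i := by
        intro i hi
        simp only [Finset.mem_Ico] at hi
        have hi1 : 1 ≤ i := by omega
        have hin : i ≤ n := by omega
        have h := hanti i n hi1 hin
        have hipos : (0 : ℝ) < (i : ℝ) := by exact_mod_cast hi1
        have hin' : (i : ℝ) ≤ n := by exact_mod_cast hin
        nlinarith [ (ha n).le ]
      have hsumge : ((n - N : ℕ) : ℝ) * a n ≤ ∑ i ∈ Finset.Ico (N + 1) (n + 1), a i := by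
        have : ∑ i ∈ Finset.Ico (N + 1) (n + 1), a n
            ≤ ∑ i ∈ Finset.Ico (N + 1) (n + 1), a i :=
          Finset.sum_le_sum hcard
        simpa [Nat.card_Ico, mul_comm, Nat.succ_sub_succ] using this
      have htail := sum_le_tail a ha hsum N n
      have h2 : (n : ℝ) ≤ 2 * ((n - N : ℕ) : ℝ) := by
        have : n ≤ 2 * (n - N) := by omega
        exact_mod_cast this
      nlinarith [ha n, hsumge, htail]
    have h0 : ∀ n : ℕ, (0 : ℝ) ≤ (n : ℝ) * a n := fun n =>
      mul_nonneg (Nat.cast_nonneg n) (ha n).le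
    refine tendsto_of_tendsto_of_tendsto_of_le_of_le'
      (tendsto_const_nhds) (by simpa using (hTt.comp hdiv).const_mul 2) ?_ ?_
    · exact Eventually.of_forall h0
    · exact eventually_atTop.2 ⟨2, hbound⟩
  -- Step 2 : main estimate with N = sqrt n
  have hsqrt : Tendsto (fun n : ℕ => Nat.sqrt n) atTop atTop := by
    refine tendsto_atTop.2 fun b => eventually_atTop.2 ⟨b * b, fun n hn => ?_⟩
    exact Nat.le_sqrt.2 hn
  have hbound : ∀ n : ℕ, 2 ≤ n →
      ((n : ℝ) * Real.log n) * a n ≤ 2 * T (Nat.sqrt n) + 2 * ((n : ℝ) * a n) := by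
    intro n hn
    set N := Nat.sqrt n with hNdef
    have hN1 : 1 ≤ N := by
      have : Nat.sqrt 1 ≤ Nat.sqrt n := Nat.sqrt_le_sqrt (by omega)
      simpa using this
    have hNn : N ≤ n := Nat.sqrt_le_self n
    have hkey := key_ineq a ha hanti hsum hN1 hNn
    rw [← harmonic_diff N n hNn] at hkey
    -- harmonic bounds
    have hlow : Real.log (n + 1) ≤ (harmonic n : ℝ) := by
      have := log_add_one_le_harmonic n
      push_cast at this ⊢
      convert this using 2
    have hup : (harmonic N : ℝ) ≤ 1 + Real.log N := harmonic_le_one_add_log N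
    have hlogN : Real.log N ≤ (1 / 2) * Real.log n := by
      have h1 : ((N : ℝ)) ≤ Real.sqrt n := by
        rw [show ((N : ℝ)) = Real.sqrt ((N : ℝ) ^ 2) by
          rw [Real.sqrt_sq (Nat.cast_nonneg N)]]
        apply Real.sqrt_le_sqrt
        have : N * N ≤ n := by simpa [hNdef, pow_two] using Nat.sqrt_le' n
        push_cast [pow_two]
        exact_mod_cast this
      have hNpos : (0 : ℝ) < N := by exact_mod_cast hN1
      calc Real.log N ≤ Real.log (Real.sqrt n) := Real.log_le_log hNpos h1
        _ = (1 / 2) * Real.log n := by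
            rw [Real.log_sqrt (Nat.cast_nonneg n)]; ring
    have hn1 : (1 : ℝ) ≤ (n : ℝ) := by exact_mod_cast (by omega : 1 ≤ n)
    have hlogn : Real.log n ≤ Real.log (n + 1) :=
      Real.log_le_log (by linarith) (by linarith)
    have hdiff : (1 / 2) * Real.log n - 1 ≤ (harmonic n : ℝ) - (harmonic N : ℝ) := by
      linarith
    have hna : (0 : ℝ) ≤ (n : ℝ) * a n := mul_nonneg (Nat.cast_nonneg n) (ha n).le
    nlinarith [hkey, mul_le_mul_of_nonneg_left hdiff hna]
  have h0 : ∀ n : ℕ, 1 ≤ n → (0 : ℝ) ≤ ((n : ℝ) * Real.log n) * a n := by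
    intro n hn
    have : (0 : ℝ) ≤ Real.log n :=
      Real.log_nonneg (by exact_mod_cast hn)
    exact mul_nonneg (mul_nonneg (Nat.cast_nonneg n) this) (ha n).le
  have hrhs : Tendsto (fun n : ℕ => 2 * T (Nat.sqrt n) + 2 * ((n : ℝ) * a n)) atTop (𝓝 0) := by
    have := ((hTt.comp hsqrt).const_mul 2).add (holiv.const_mul 2)
    simpa using this
  refine tendsto_of_tendsto_of_tendsto_of_le_of_le'
    tendsto_const_nhds hrhs ?_ ?_
  · exact eventually_atTop.2 ⟨1, h0⟩
  · exact eventually_atTop.2 ⟨2, hbound⟩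
end

section
/- Suppose (aₙ)ₙ≥1 is a nonincreasing sequence of positive real numbers converging to 0, and (zₙ)ₙ≥1 is a sequence of complex numbers such that the series ∑ aₙ·zₙ converges. Then aₙ·(z₁ + z₂ + ⋯ + zₙ) → 0 as n → ∞. -/
open Filter Topology

/-- Complex extension of Olivier's theorem: if `(a n)` is a nonincreasing
sequence of positive reals converging to `0` and `(z n)` is a sequence of
complex numbers such that the series `∑ a n * z n` converges, then
`a n * (z 0 + ⋯ + z n) → 0`. -/
theorem olivier_complex (a : ℕ → ℝ) (z : ℕ → ℂ)
    (ha : ∀ n, 0 < a n) (hanti : Antitone a)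
    (hlim : Tendsto a atTop (𝓝 0))
    (hconv : ∃ L : ℂ, Tendsto (fun n => ∑ k ∈ Finset.range n, (a k : ℂ) * z k)
      atTop (𝓝 L)) :
    Tendsto (fun n => (a n : ℂ) * ∑ k ∈ Finset.range (n + 1), z k)
      atTop (𝓝 0) := by
  obtain ⟨L, hL⟩ := hconv
  have ha0 : ∀ n, (a n : ℂ) ≠ 0 := fun n => by exact_mod_cast (ha n).ne'
  set S : ℕ → ℂ := fun n => ∑ k ∈ Finset.range n, (a k : ℂ) * z k with hSdef
  have hC : CauchySeq S := hL.cauchySeq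
  rw [NormedAddCommGroup.tendsto_nhds_zero]
  intro ε hε
  obtain ⟨N, hN⟩ := Metric.cauchySeq_iff'.mp hC (ε/4) (by positivity)
  have hR : ∀ k, N ≤ k → ‖S (k+1) - S N‖ ≤ ε/4 := fun k hk =>
    le_of_lt (by simpa [dist_eq_norm] using hN (k+1) (le_trans hk (Nat.le_succ k)))
  -- Abel summation identity
  have key : ∀ n, N ≤ n →
      ∑ k ∈ Finset.Ico N (n+1), z k
        = (S (n+1) - S N) / (a n : ℂ)
          + ∑ k ∈ Finset.Ico N n,
              (S (k+1) - S N) * (1/(a k : ℂ) - 1/(a (k+1) : ℂ)) := by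
    intro n hn
    induction n, hn using Nat.le_induction with
    | base =>
        have hs : S (N+1) = S N + (a N : ℂ) * z N := Finset.sum_range_succ _ _
        rw [Finset.sum_Ico_succ_top le_rfl, hs]
        simp only [Finset.Ico_self, Finset.sum_empty, zero_add, add_zero]
        rw [add_sub_cancel_left, mul_div_cancel_left₀ (z N) (ha0 N)]
    | succ m hm ih =>
        have hs : S (m+2) = S (m+1) + (a (m+1) : ℂ) * z (m+1) :=
          Finset.sum_range_succ _ _
        rw [Finset.sum_Ico_succ_top (le_trans hm (Nat.le_succ m)), ih,
          Finset.sum_Ico_succ_top hm, hs]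
        field_simp [ha0]
        ring
  -- bound the tail sum
  have bound : ∀ n, N ≤ n → a n * ‖∑ k ∈ Finset.Ico N (n+1), z k‖ ≤ ε/2 := by
    intro n hn
    rw [key n hn]
    have h1 : ‖(S (n+1) - S N) / (a n : ℂ)‖ ≤ (ε/4) / a n := by
      rw [norm_div, Complex.norm_real, Real.norm_eq_abs, abs_of_pos (ha n)]
      gcongr <;> first | exact (ha n).le | exact hR n hn
    have h2 : ‖∑ k ∈ Finset.Ico N n,
        (S (k+1) - S N) * (1/(a k : ℂ) - 1/(a (k+1) : ℂ))‖
        ≤ (ε/4) * (1/a n - 1/a N) := by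
      calc ‖∑ k ∈ Finset.Ico N n,
          (S (k+1) - S N) * (1/(a k : ℂ) - 1/(a (k+1) : ℂ))‖
          ≤ ∑ k ∈ Finset.Ico N n, (ε/4) * (1/a (k+1) - 1/a k) := by
            refine (norm_sum_le _ _).trans (Finset.sum_le_sum ?_)
            intro k hk
            rw [Finset.mem_Ico] at hk
            rw [norm_mul]
            have hcast : (1/(a k : ℂ) - 1/(a (k+1) : ℂ))
                = ((1/a k - 1/a (k+1) : ℝ) : ℂ) := by push_cast; ring
            rw [hcast, Complex.norm_real, Real.norm_eq_abs, abs_of_nonpos]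
            · have := hR k hk.1
              have hpos : (0:ℝ) ≤ -(1 / a k - 1 / a (k + 1)) := by
                rw [neg_nonneg, sub_nonpos]
                exact one_div_le_one_div_of_le (ha (k+1)) (hanti (Nat.le_succ k))
              nlinarith [norm_nonneg (S (k+1) - S N)]
            · rw [sub_nonpos]
              exact one_div_le_one_div_of_le (ha (k+1)) (hanti (Nat.le_succ k))
        _ = (ε/4) * (1/a n - 1/a N) := by
            rw [← Finset.mul_sum]
            congr 1
            rw [Finset.sum_Ico_eq_sub _ hn, Finset.sum_range_sub (fun k => 1 / a k),
              Finset.sum_range_sub (fun k => 1 / a k)]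
            ring
    have h3 : ‖(S (n+1) - S N) / (a n : ℂ) + ∑ k ∈ Finset.Ico N n,
        (S (k+1) - S N) * (1/(a k : ℂ) - 1/(a (k+1) : ℂ))‖
        ≤ (ε/4)/a n + (ε/4) * (1/a n - 1/a N) :=
      (norm_add_le _ _).trans (add_le_add h1 h2)
    have han := ha n
    have haN := ha N
    have hdiv : 0 ≤ a n / a N := le_of_lt (div_pos han haN)
    calc a n * ‖_‖ ≤ a n * ((ε/4)/a n + (ε/4) * (1/a n - 1/a N)) := by
          exact mul_le_mul_of_nonneg_left h3 han.le
      _ = ε/4 + (ε/4) * (1 - a n / a N) := by field_simp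
      _ ≤ ε/2 := by nlinarith
  -- assemble
  have hhead : Tendsto (fun n => a n * ‖∑ k ∈ Finset.range N, z k‖) atTop (𝓝 0) := by
    simpa using hlim.mul_const ‖∑ k ∈ Finset.range N, z k‖
  have hev : ∀ᶠ n in atTop, a n * ‖∑ k ∈ Finset.range N, z k‖ < ε/2 := by
    have := hhead.eventually (eventually_lt_nhds (show (0:ℝ) < ε/2 by positivity))
    simpa using this
  filter_upwards [hev, eventually_ge_atTop N] with n hn1 hn2
  have hsplit : ∑ k ∈ Finset.range (n+1), z k
      = ∑ k ∈ Finset.range N, z k + ∑ k ∈ Finset.Ico N (n+1), z k :=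
    (Finset.sum_range_add_sum_Ico _ (le_trans hn2 (Nat.le_succ n))).symm
  calc ‖(a n : ℂ) * ∑ k ∈ Finset.range (n + 1), z k‖
      = a n * ‖∑ k ∈ Finset.range (n+1), z k‖ := by
        rw [norm_mul, Complex.norm_real, Real.norm_eq_abs, abs_of_pos (ha n)]
    _ ≤ a n * (‖∑ k ∈ Finset.range N, z k‖ + ‖∑ k ∈ Finset.Ico N (n+1), z k‖) := by
        rw [hsplit]
        exact mul_le_mul_of_nonneg_left (norm_add_le _ _) (ha n).le
    _ = a n * ‖∑ k ∈ Finset.range N, z k‖ + a n * ‖∑ k ∈ Finset.Ico N (n+1), z k‖ := by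
        ring
    _ < ε/2 + ε/2 := by
        exact add_lt_add_of_lt_of_le hn1 (bound n hn2)
    _ = ε := by ring
end

section
/- If (aₙ)ₙ≥1 is a sequence of positive real numbers such that the series ∑ aₙ converges, then the sequence (n·aₙ)ₙ converges in density to 0. -/
open Filter Topology

/-- Šalát–Toma theorem: if `∑ a n` is a convergent positive series, then
`(n * a n)` converges in density to `0`: for every `ε > 0`, the set of indices
`k` with `k * a k ≥ ε` has zero (natural) density. -/
theorem salat_toma (a : ℕ → ℝ) (ha : ∀ n, 0 < a n) (hsum : Summable a) :
    ∀ ε > (0 : ℝ),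
      Tendsto
        (fun n : ℕ =>
          (((Finset.Icc 1 n).filter (fun k : ℕ => ε ≤ (k : ℝ) * a k)).card : ℝ) / n)
        atTop (𝓝 0) := by
  intro ε hε
  rw [Metric.tendsto_atTop]
  intro δ hδ
  obtain ⟨m, hm⟩ := Metric.tendsto_atTop.mp (tendsto_sum_nat_add a) (ε * δ / 2)
    (by positivity)
  set T : ℝ := ∑' k, a (k + (m + 1)) with hTdef
  have hsum' : Summable fun k => a (k + (m + 1)) := (summable_nat_add_iff (m + 1)).2 hsum
  have hT0 : 0 ≤ T := tsum_nonneg fun k => (ha _).le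
  have hTlt : T < ε * δ / 2 := by
    have := hm (m + 1) (Nat.le_succ m)
    rwa [Real.dist_eq, sub_zero, abs_of_nonneg hT0] at this
  refine ⟨max (m + 1) (⌈2 * (m : ℝ) / δ⌉₊ + 1), fun n hn => ?_⟩
  have hn1 : m + 1 ≤ n := le_trans (le_max_left _ _) hn
  have hn2 : ⌈2 * (m : ℝ) / δ⌉₊ + 1 ≤ n := le_trans (le_max_right _ _) hn
  have hnpos : (0 : ℝ) < n := by exact_mod_cast (show 0 < n by omega)
  -- m / n < δ / 2
  have hmn : (m : ℝ) / n < δ / 2 := by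
    have h1 : (2 * (m : ℝ) / δ) ≤ (⌈2 * (m : ℝ) / δ⌉₊ : ℝ) := Nat.le_ceil _
    have h2 : ((⌈2 * (m : ℝ) / δ⌉₊ : ℝ)) < n := by exact_mod_cast Nat.lt_of_succ_le hn2
    rw [div_lt_iff₀ hnpos]
    have h3 : 2 * (m : ℝ) / δ < n := lt_of_le_of_lt h1 h2
    rw [div_lt_iff₀ hδ] at h3
    nlinarith
  -- split the filtered set
  have hsub : (Finset.Icc 1 n).filter (fun k : ℕ => ε ≤ (k : ℝ) * a k) ⊆
      (Finset.Icc 1 m).filter (fun k : ℕ => ε ≤ (k : ℝ) * a k) ∪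
      (Finset.Icc (m + 1) n).filter (fun k : ℕ => ε ≤ (k : ℝ) * a k) := by
    intro k hk
    simp only [Finset.mem_filter, Finset.mem_union, Finset.mem_Icc] at *
    rcases le_or_gt k m with h | h
    · exact Or.inl ⟨⟨hk.1.1, h⟩, hk.2⟩
    · exact Or.inr ⟨⟨h, hk.1.2⟩, hk.2⟩
  set B := (Finset.Icc (m + 1) n).filter (fun k : ℕ => ε ≤ (k : ℝ) * a k) with hBdef
  -- bound on the second block
  have hkey : (B.card : ℝ) * (ε / n) ≤ T := by
    have h1 : (B.card : ℝ) * (ε / n) = ∑ _k ∈ B, (ε / n) := by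
      rw [Finset.sum_const, nsmul_eq_mul]
    rw [h1]
    have h2 : ∑ _k ∈ B, (ε / n) ≤ ∑ k ∈ B, a k := by
      refine Finset.sum_le_sum fun k hk => ?_
      simp only [hBdef, Finset.mem_filter, Finset.mem_Icc] at hk
      have hkn : (k : ℝ) ≤ n := by exact_mod_cast hk.1.2
      have : ε ≤ (n : ℝ) * a k :=
        le_trans hk.2 (mul_le_mul_of_nonneg_right hkn (ha k).le)
      rw [div_le_iff₀ hnpos]
      linarith [this]
    refine le_trans h2 ?_
    have h3 : ∑ k ∈ B, a k ≤ ∑ k ∈ Finset.Icc (m + 1) n, a k :=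
      Finset.sum_le_sum_of_subset_of_nonneg (Finset.filter_subset _ _)
        (fun k _ _ => (ha k).le)
    refine le_trans h3 ?_
    rw [← Finset.Ico_add_one_right_eq_Icc, Finset.sum_Ico_eq_sum_range]
    have h4 : ∑ i ∈ Finset.range (n + 1 - (m + 1)), a (m + 1 + i)
        = ∑ i ∈ Finset.range (n + 1 - (m + 1)), a (i + (m + 1)) := by
      refine Finset.sum_congr rfl fun i _ => by rw [add_comm]
    rw [h4]
    exact Summable.sum_le_tsum _ (fun i _ => (ha _).le) hsum'
  have hB : (B.card : ℝ) ≤ T * n / ε := by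
    rw [le_div_iff₀ hε]
    have h5 : (B.card : ℝ) * ε = (B.card : ℝ) * (ε / n) * n := by
      field_simp
    rw [h5]
    exact mul_le_mul_of_nonneg_right hkey hnpos.le
  have hcard : ((((Finset.Icc 1 n).filter (fun k : ℕ => ε ≤ (k : ℝ) * a k)).card : ℝ))
      ≤ m + T * n / ε := by
    have h6 := Finset.card_le_card hsub
    have h7 := Finset.card_union_le
      ((Finset.Icc 1 m).filter (fun k : ℕ => ε ≤ (k : ℝ) * a k)) B
    have h8 : ((Finset.Icc 1 m).filter (fun k : ℕ => ε ≤ (k : ℝ) * a k)).card ≤ m := by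
      refine le_trans (Finset.card_filter_le _ _) ?_
      simp [Nat.card_Icc]
    have : (((Finset.Icc 1 n).filter (fun k : ℕ => ε ≤ (k : ℝ) * a k)).card : ℝ)
        ≤ (m : ℝ) + (B.card : ℝ) := by
      exact_mod_cast le_trans h6 (le_trans h7 (by omega))
    linarith
  -- conclude
  have hnonneg : (0 : ℝ) ≤
      (((Finset.Icc 1 n).filter (fun k : ℕ => ε ≤ (k : ℝ) * a k)).card : ℝ) / n :=
    div_nonneg (Nat.cast_nonneg _) hnpos.le
  rw [Real.dist_eq, sub_zero, abs_of_nonneg hnonneg]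
  have heq : ((m : ℝ) + T * n / ε) / n = (m : ℝ) / n + T / ε := by
    rw [add_div]
    congr 1
    rw [div_div, mul_comm ε (n : ℝ), ← div_div, mul_div_assoc, div_self hnpos.ne', mul_one]
  have hfinal : (((Finset.Icc 1 n).filter (fun k : ℕ => ε ≤ (k : ℝ) * a k)).card : ℝ) / n
      ≤ (m : ℝ) / n + T / ε := by
    rw [← heq]
    gcongr
  have hTe : T / ε < δ / 2 := by
    rw [div_lt_iff₀ hε]
    nlinarith
  linarith
end

section
/- Assume (aₙ)ₙ≥1 is a sequence of positive real numbers such that the series ∑ aₙ converges, and (bₙ)ₙ≥1 is a nondecreasing sequence of positive real numbers such that ∑_{n=1}^{∞} 1/bₙ = ∞. Then the sequence (aₙ·bₙ)ₙ converges in lower density to 0. -/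
open Filter Topology
open Finset

/-- Generalized Šalát–Toma theorem, first part: if `∑ a n` is a convergent
positive series and `(b n)` is a nondecreasing sequence of positive reals with
`∑ 1 / b n = ∞`, then `(a n * b n)` converges in lower density to `0`. -/
theorem salat_toma_gen_lower (a b : ℕ → ℝ) (ha : ∀ n, 0 < a n)
    (hsum : Summable a) (hb : ∀ n, 0 < b n) (hmono : Monotone b)
    (hdiv : ¬ Summable (fun n => 1 / b n)) :
    ∀ ε > (0 : ℝ),
      liminf
        (fun n : ℕ =>
          (((Finset.Icc 1 n).filter (fun k : ℕ => ε ≤ a k * b k)).card : ℝ) / n)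
        atTop = 0 := by
  intro ε hε
  set f : ℕ → ℝ := fun n =>
    (((Finset.Icc 1 n).filter (fun k : ℕ => ε ≤ a k * b k)).card : ℝ) / n with hfdef
  have hf0 : ∀ n, 0 ≤ f n := fun n => div_nonneg (Nat.cast_nonneg _) (Nat.cast_nonneg _)
  have hf1 : ∀ n, f n ≤ 1 := by
    intro n
    rcases Nat.eq_zero_or_pos n with h | h
    · subst h; simp [hfdef]
    · apply div_le_one_of_le₀
      · have := Finset.card_filter_le (Finset.Icc 1 n) (fun k : ℕ => ε ≤ a k * b k)
        have h2 : (Finset.Icc 1 n).card = n := by simp [Nat.card_Icc]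
        exact_mod_cast h2 ▸ this
      · positivity
  have hbddA : IsBoundedUnder (· ≤ ·) atTop f := isBoundedUnder_of ⟨1, hf1⟩
  have hbddB : IsBoundedUnder (· ≥ ·) atTop f := isBoundedUnder_of ⟨0, fun n => hf0 n⟩
  have hL0 : 0 ≤ liminf f atTop :=
    le_liminf_of_le hbddA.isCoboundedUnder_ge (Eventually.of_forall hf0)
  by_contra hne
  have hL : 0 < liminf f atTop := lt_of_le_of_ne hL0 (Ne.symm hne)
  set c : ℝ := liminf f atTop / 2 with hcdef
  have hc : 0 < c := by positivity
  have hev : ∀ᶠ n in atTop, c < f n :=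
    eventually_lt_of_lt_liminf (by rw [hcdef]; linarith) hbddB
  obtain ⟨N₀, hN₀⟩ := eventually_atTop.mp hev
  set N : ℕ := max N₀ 1 with hNdef
  have hN1 : 1 ≤ N := le_max_right _ _
  have hN₀N : N₀ ≤ N := le_max_left _ _
  set K : ℕ := max 2 ⌈2 / c⌉₊ with hKdef
  have hK2 : 2 ≤ K := le_max_left _ _
  have hKc : 2 / c ≤ (K : ℝ) := le_trans (Nat.le_ceil _) (by exact_mod_cast le_max_right _ _)
  have hcK : 2 ≤ c * K := by
    rw [div_le_iff₀ hc] at hKc; linarith [mul_comm c (K:ℝ)]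
  -- the indicator-type function
  set g : ℕ → ℝ := fun k => if ε ≤ a k * b k then 1 / b k else 0 with hgdef
  have hg0 : ∀ k, 0 ≤ g k := by
    intro k; rw [hgdef]; dsimp only
    split
    · exact one_div_nonneg.mpr (hb _).le
    · exact le_rfl
  have hgsum : Summable g := by
    apply Summable.of_nonneg_of_le hg0 _ (hsum.div_const ε)
    intro k
    rw [hgdef]; dsimp only
    split
    · rename_i h
      rw [div_le_div_iff₀ (hb k) hε]
      nlinarith [hb k, ha k]
    · exact div_nonneg (ha k).le hε.le
  set S : ℝ := ∑' k, g k with hSdef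
  have hgS : ∀ s : Finset ℕ, ∑ k ∈ s, g k ≤ S :=
    fun s => Summable.sum_le_tsum s (fun k _ => hg0 k) hgsum
  -- key block inequality
  have key : ∀ n : ℕ, N ≤ n →
      ∑ k ∈ Ioc (K * n) (K * (K * n)), 1 / b k ≤ (K : ℝ) ^ 2 * ∑ k ∈ Ioc n (K * n), g k := by
    intro n hn
    have hn1 : 1 ≤ n := le_trans hN1 hn
    have hKnn : n ≤ K * n := Nat.le_mul_of_pos_left n (by omega)
    have hKnpos : (0 : ℝ) < (K * n : ℕ) := by
      have : 0 < K * n := by positivity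
      exact_mod_cast this
    -- card of A up to K*n is at least 2n
    have hA : 2 * n ≤ ((Icc 1 (K * n)).filter (fun k : ℕ => ε ≤ a k * b k)).card := by
      have h1 : c < f (K * n) := hN₀ (K * n) (le_trans hN₀N (le_trans hn hKnn))
      rw [hfdef] at h1
      have h2 : c * (K * n : ℕ) <
          (((Icc 1 (K * n)).filter (fun k : ℕ => ε ≤ a k * b k)).card : ℝ) :=
        (lt_div_iff₀ hKnpos).mp h1
      have h3 : ((2 * n : ℕ) : ℝ) ≤ c * ((K * n : ℕ) : ℝ) := by
        push_cast
        nlinarith [hc.le, (Nat.cast_nonneg n : (0:ℝ) ≤ n)]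
      exact_mod_cast le_of_lt (lt_of_le_of_lt h3 h2)
    -- hence at least n elements of A in (n, K*n]
    have hcard : n ≤ ((Ioc n (K * n)).filter (fun k : ℕ => ε ≤ a k * b k)).card := by
      have hun : Icc 1 (K * n) = Icc 1 n ∪ Ioc n (K * n) := by
        ext k
        simp only [Finset.mem_Icc, Finset.mem_Ioc, Finset.mem_union]
        omega
      have h4 : ((Icc 1 (K * n)).filter (fun k : ℕ => ε ≤ a k * b k)).card ≤
          ((Icc 1 n).filter (fun k : ℕ => ε ≤ a k * b k)).card +
          ((Ioc n (K * n)).filter (fun k : ℕ => ε ≤ a k * b k)).card := by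
        rw [hun, Finset.filter_union]
        exact Finset.card_union_le _ _
      have h5 : ((Icc 1 n).filter (fun k : ℕ => ε ≤ a k * b k)).card ≤ n := by
        have := Finset.card_filter_le (Icc 1 n) (fun k : ℕ => ε ≤ a k * b k)
        simpa [Nat.card_Icc] using this
      omega
    -- lower bound on the g-sum over (n, K*n]
    have hlow : (n : ℝ) * (1 / b (K * n)) ≤ ∑ k ∈ Ioc n (K * n), g k := by
      have h6 : ∑ k ∈ (Ioc n (K * n)).filter (fun k : ℕ => ε ≤ a k * b k), 1 / b k =
          ∑ k ∈ Ioc n (K * n), g k := by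
        rw [hgdef, Finset.sum_filter]
      have h7 := Finset.card_nsmul_le_sum
        ((Ioc n (K * n)).filter (fun k : ℕ => ε ≤ a k * b k)) (fun k => 1 / b k)
        (1 / b (K * n)) ?_
      · rw [h6] at h7
        rw [nsmul_eq_mul] at h7
        calc (n : ℝ) * (1 / b (K * n)) ≤
            (((Ioc n (K * n)).filter (fun k : ℕ => ε ≤ a k * b k)).card : ℝ) * (1 / b (K * n)) := by
              apply mul_le_mul_of_nonneg_right _ (one_div_nonneg.mpr (hb _).le)
              exact_mod_cast hcard
          _ ≤ _ := h7
      · intro k hk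
        have hk' := Finset.mem_Ioc.mp (Finset.mem_filter.mp hk).1
        exact one_div_le_one_div_of_le (hb k) (hmono hk'.2)
    -- upper bound on the full sum over (K*n, K*(K*n)]
    have hup : ∑ k ∈ Ioc (K * n) (K * (K * n)), 1 / b k ≤
        ((K : ℝ) ^ 2 * n) * (1 / b (K * n)) := by
      have h8 := Finset.sum_le_card_nsmul (Ioc (K * n) (K * (K * n))) (fun k => 1 / b k)
        (1 / b (K * n)) ?_
      · rw [nsmul_eq_mul] at h8
        refine h8.trans ?_
        apply mul_le_mul_of_nonneg_right _ (one_div_nonneg.mpr (hb _).le)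
        rw [Nat.card_Ioc]
        have : K * (K * n) - K * n ≤ K * K * n := by
          have : K * (K * n) = K * K * n := by ring
          omega
        calc ((K * (K * n) - K * n : ℕ) : ℝ) ≤ ((K * K * n : ℕ) : ℝ) := by exact_mod_cast this
          _ = (K : ℝ) ^ 2 * n := by push_cast; ring
      · intro k hk
        have hk' := Finset.mem_Ioc.mp hk
        exact one_div_le_one_div_of_le (hb (K * n)) (hmono hk'.1.le)
    calc ∑ k ∈ Ioc (K * n) (K * (K * n)), 1 / b k
        ≤ ((K : ℝ) ^ 2 * n) * (1 / b (K * n)) := hup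
      _ = (K : ℝ) ^ 2 * ((n : ℝ) * (1 / b (K * n))) := by ring
      _ ≤ (K : ℝ) ^ 2 * ∑ k ∈ Ioc n (K * n), g k := by
          apply mul_le_mul_of_nonneg_left hlow (by positivity)
  -- iterate over geometric blocks
  have hIoc : ∀ J : ℕ, ∑ k ∈ Ioc (K * N) (K * (N * K ^ J)), 1 / b k ≤
      (K : ℝ) ^ 2 * ∑ k ∈ Ioc N (N * K ^ J), g k := by
    intro J
    induction J with
    | zero =>
        simp only [pow_zero, mul_one, Finset.Ioc_self, Finset.sum_empty]
        simp
    | succ J ih =>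
        have hM : N ≤ N * K ^ J := Nat.le_mul_of_pos_right _ (by positivity)
        have hMM : N * K ^ (J + 1) = K * (N * K ^ J) := by ring
        have hb1 : K * N ≤ K * (N * K ^ J) := Nat.mul_le_mul_left _ hM
        have hb2 : K * (N * K ^ J) ≤ K * (K * (N * K ^ J)) :=
          Nat.le_mul_of_pos_left _ (by omega)
        have hsplit := Finset.sum_Ioc_consecutive (fun k => 1 / b k) hb1 hb2
        have hgsplit := Finset.sum_Ioc_consecutive g hM
          (Nat.le_mul_of_pos_left _ (show 0 < K by omega))
        rw [hMM]
        rw [← hsplit, ← hgsplit, mul_add]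
        exact add_le_add ih (key (N * K ^ J) hM)
  -- summability of 1/b, contradiction
  apply hdiv
  apply summable_of_sum_range_le
    (c := (∑ k ∈ range (K * N + 1), 1 / b k) + (K : ℝ) ^ 2 * S)
  · intro n; exact one_div_nonneg.mpr (hb n).le
  · intro m
    have hm : m ≤ K * (N * K ^ m) := by
      have h1 : m < 2 ^ m := Nat.lt_two_pow_self
      have h2 : 2 ^ m ≤ K ^ m := Nat.pow_le_pow_left hK2 m
      have h3 : K ^ m ≤ K * N * K ^ m := Nat.le_mul_of_pos_left _ (by positivity)
      have h4 : K * N * K ^ m = K * (N * K ^ m) := by ring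
      omega
    have hsub : range m ⊆ range (K * N + 1) ∪ Ioc (K * N) (K * (N * K ^ m)) := by
      intro k hk
      simp only [Finset.mem_range, Finset.mem_union, Finset.mem_Ioc] at *
      by_cases hkK : k ≤ K * N
      · left; omega
      · right; omega
    have hdisj : Disjoint (range (K * N + 1)) (Ioc (K * N) (K * (N * K ^ m))) := by
      rw [Finset.disjoint_left]
      intro k hk1 hk2
      simp only [Finset.mem_range, Finset.mem_Ioc] at *
      omega
    calc ∑ i ∈ range m, 1 / b i
        ≤ ∑ i ∈ range (K * N + 1) ∪ Ioc (K * N) (K * (N * K ^ m)), 1 / b i :=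
          Finset.sum_le_sum_of_subset_of_nonneg hsub
            (fun i _ _ => one_div_nonneg.mpr (hb i).le)
      _ = (∑ i ∈ range (K * N + 1), 1 / b i) +
          ∑ i ∈ Ioc (K * N) (K * (N * K ^ m)), 1 / b i := Finset.sum_union hdisj
      _ ≤ (∑ i ∈ range (K * N + 1), 1 / b i) + (K : ℝ) ^ 2 * S := by
          apply add_le_add_right
          refine (hIoc m).trans ?_
          exact mul_le_mul_of_nonneg_left (hgS _) (by positivity)
end

section
/- Assume (aₙ)ₙ≥1 is a sequence of positive real numbers such that the series ∑ aₙ converges, and (bₙ)ₙ≥1 is a nondecreasing sequence of positive real numbers such that ∑_{n=1}^{∞} 1/bₙ = ∞ and inf_{n≥1} n/bₙ > 0. Then the sequence (aₙ·bₙ)ₙ converges in density to 0. -/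
open Filter Topology

/-- Generalized Šalát–Toma theorem, second part: if moreover
`inf_{n ≥ 1} n / b n > 0`, then `(a n * b n)` converges in density to `0`. -/
theorem salat_toma_gen (a b : ℕ → ℝ) (ha : ∀ n, 0 < a n)
    (hsum : Summable a) (hb : ∀ n, 0 < b n) (hmono : Monotone b)
    (hdiv : ¬ Summable (fun n => 1 / b n))
    (hinf : ∃ c > (0 : ℝ), ∀ n : ℕ, 1 ≤ n → c ≤ (n : ℝ) / b n) :
    ∀ ε > (0 : ℝ),
      Tendsto
        (fun n : ℕ =>
          (((Finset.Icc 1 n).filter (fun k : ℕ => ε ≤ a k * b k)).card : ℝ) / n)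
        atTop (𝓝 0) := by
  obtain ⟨c, hc, hcb⟩ := hinf
  intro ε hε
  set f : ℕ → ℝ := fun k => if ε ≤ a k * b k then 1 / b k else 0 with hfdef
  have hf0 : ∀ k, 0 ≤ f k := by
    intro k; simp only [hfdef]; split
    · have := hb k; positivity
    · exact le_refl 0
  have hfle : ∀ k, f k ≤ a k / ε := by
    intro k
    simp only [hfdef]; split
    · rename_i h
      rw [div_le_div_iff₀ (hb k) hε]
      nlinarith
    · have := (ha k).le; positivity
  have hfsum : Summable f :=
    Summable.of_nonneg_of_le hf0 hfle (hsum.div_const ε)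
  -- tails tend to zero
  have htail : Tendsto (fun m => ∑' k, f (k + m)) atTop (𝓝 0) :=
    tendsto_sum_nat_add f
  rw [Metric.tendsto_atTop]
  intro δ hδ
  -- choose m with tail < c * δ / 2
  have h1 : ∀ᶠ m in atTop, ∑' k, f (k + m) < c * δ / 2 := by
    have := htail.eventually (eventually_lt_nhds (show (0:ℝ) < c * δ / 2 by positivity))
    exact this
  obtain ⟨m, hm⟩ := h1.exists
  -- key bound for n ≥ m
  have key : ∀ n : ℕ, 1 ≤ n → m ≤ n →
      (((Finset.Icc 1 n).filter (fun k : ℕ => ε ≤ a k * b k)).card : ℝ) / n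
        ≤ (m : ℝ) / n + (∑' k, f (k + m)) / c := by
    intro n hn1 hmn
    have hbn := hb n
    have hn0 : (0:ℝ) < n := by exact_mod_cast hn1
    -- split the filter
    have hsplit : ((Finset.Icc 1 n).filter (fun k : ℕ => ε ≤ a k * b k)).card
        ≤ m + ((Finset.Icc (m+1) n).filter (fun k : ℕ => ε ≤ a k * b k)).card := by
      have hsub : (Finset.Icc 1 n).filter (fun k : ℕ => ε ≤ a k * b k)
          ⊆ (Finset.Icc 1 m) ∪ (Finset.Icc (m+1) n).filter (fun k : ℕ => ε ≤ a k * b k) := by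
        intro k hk
        simp only [Finset.mem_filter, Finset.mem_Icc, Finset.mem_union] at hk ⊢
        rcases le_or_gt k m with h | h
        · exact Or.inl ⟨hk.1.1, h⟩
        · exact Or.inr ⟨⟨h, hk.1.2⟩, hk.2⟩
      calc ((Finset.Icc 1 n).filter (fun k : ℕ => ε ≤ a k * b k)).card
          ≤ ((Finset.Icc 1 m) ∪ (Finset.Icc (m+1) n).filter (fun k : ℕ => ε ≤ a k * b k)).card :=
            Finset.card_le_card hsub
        _ ≤ (Finset.Icc 1 m).card + ((Finset.Icc (m+1) n).filter (fun k : ℕ => ε ≤ a k * b k)).card :=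
            Finset.card_union_le _ _
        _ = m + _ := by rw [Nat.card_Icc]; simp
    -- bound the second card
    set s := (Finset.Icc (m+1) n).filter (fun k : ℕ => ε ≤ a k * b k) with hs
    have hcard : (s.card : ℝ) * (1 / b n) ≤ ∑' k, f (k + m) := by
      have h1 : (s.card : ℝ) * (1 / b n) ≤ ∑ k ∈ s, (1 / b k) := by
        rw [← nsmul_eq_mul]
        apply Finset.card_nsmul_le_sum
        intro k hk
        simp only [hs, Finset.mem_filter, Finset.mem_Icc] at hk
        exact one_div_le_one_div_of_le (hb k) (hmono hk.1.2)
      have h2 : ∑ k ∈ s, (1 / b k) = ∑ k ∈ s, f k := by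
        apply Finset.sum_congr rfl
        intro k hk
        simp only [hs, Finset.mem_filter] at hk
        simp [hfdef, hk.2]
      have h3 : ∑ k ∈ s, f k ≤ ∑ k ∈ Finset.Icc (m+1) n, f k :=
        Finset.sum_le_sum_of_subset_of_nonneg (Finset.filter_subset _ _)
          (fun k _ _ => hf0 k)
      have h4 : ∑ k ∈ Finset.Icc (m+1) n, f k ≤ ∑' k, f (k + m) := by
        have hsum' : Summable (fun k => f (k + m)) := (summable_nat_add_iff m).2 hfsum
        calc ∑ k ∈ Finset.Icc (m+1) n, f k
            = ∑ i ∈ Finset.range (n - m), f ((i + 1) + m) := by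
              rw [← Finset.Ico_add_one_right_eq_Icc, Finset.sum_Ico_eq_sum_range]
              apply Finset.sum_congr
              · congr 1; omega
              · intro i _; congr 1; omega
          _ ≤ ∑ i ∈ Finset.range (n - m + 1), f (i + m) := by
              rw [Finset.sum_range_succ']
              have : (0:ℝ) ≤ f (0 + m) := hf0 _
              linarith
          _ ≤ ∑' k, f (k + m) := Summable.sum_le_tsum _ (fun k _ => hf0 _) hsum'
      linarith
    -- combine
    have hbnn : (0:ℝ) < b n := hbn
    have hcn : b n / n ≤ 1 / c := by
      have h := hcb n hn1
      rw [le_div_iff₀ hbnn] at h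
      rw [div_le_div_iff₀ hn0 hc]
      nlinarith
    have hcard' : (s.card : ℝ) / n ≤ (∑' k, f (k + m)) / c := by
      have h5 : (s.card : ℝ) ≤ (∑' k, f (k + m)) * b n := by
        have := hcard
        rw [mul_one_div, div_le_iff₀ hbnn] at this
        linarith
      calc (s.card : ℝ) / n ≤ (∑' k, f (k + m)) * b n / n := by
            gcongr
        _ = (∑' k, f (k + m)) * (b n / n) := by ring
        _ ≤ (∑' k, f (k + m)) * (1 / c) := by
            apply mul_le_mul_of_nonneg_left hcn
            exact tsum_nonneg (fun k => hf0 _)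
        _ = (∑' k, f (k + m)) / c := by ring
    calc (((Finset.Icc 1 n).filter (fun k : ℕ => ε ≤ a k * b k)).card : ℝ) / n
        ≤ ((m : ℝ) + s.card) / n := by
          gcongr
          exact_mod_cast hsplit
      _ = (m : ℝ) / n + (s.card : ℝ) / n := by ring
      _ ≤ (m : ℝ) / n + (∑' k, f (k + m)) / c := by linarith
  -- choose N
  obtain ⟨N, hN⟩ := exists_nat_gt (2 * m / δ)
  refine ⟨max (max N m) 1, fun n hn => ?_⟩
  have hn1 : 1 ≤ n := le_trans (le_max_right _ _) hn
  have hnm : m ≤ n := le_trans (le_trans (le_max_right _ _) (le_max_left _ _)) hn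
  have hnN : N ≤ n := le_trans (le_trans (le_max_left _ _) (le_max_left _ _)) hn
  have hn0 : (0:ℝ) < n := by exact_mod_cast hn1
  have hbound := key n hn1 hnm
  have hnonneg : (0:ℝ) ≤ (((Finset.Icc 1 n).filter (fun k : ℕ => ε ≤ a k * b k)).card : ℝ) / n := by
    positivity
  rw [Real.dist_eq, sub_zero, abs_of_nonneg hnonneg]
  have h6 : (m : ℝ) / n < δ / 2 := by
    rw [div_lt_iff₀ hn0]
    have h7 : 2 * (m:ℝ) / δ < n := lt_of_lt_of_le hN (by exact_mod_cast hnN)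
    rw [div_lt_iff₀ hδ] at h7
    linarith
  have h8 : (∑' k, f (k + m)) / c < δ / 2 := by
    rw [div_lt_iff₀ hc]
    calc ∑' k, f (k + m) < c * δ / 2 := hm
      _ = δ / 2 * c := by ring
  linarith
end

section
/- If (aₙ)ₙ≥1 is a sequence of positive real numbers such that the series ∑ aₙ converges, then for each natural number k ≥ 1, the sequence whose n-th term is n·(ln n)·(ln ln n)⋯(ln^{[k]} n)·aₙ (the product of n, the first k iterated natural logarithms of n, and aₙ) converges in lower density to 0. -/
open Filter Topology

noncomputable def Etow : ℕ → ℝ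
  | 0 => 1
  | k+1 => Real.exp (Etow k)

lemma one_le_Etow (k : ℕ) : 1 ≤ Etow k := by
  induction k with
  | zero => simp [Etow]
  | succ k ih => calc (1:ℝ) ≤ Etow k := ih
                 _ ≤ Real.exp (Etow k) := (Real.add_one_le_exp _).trans' (by linarith)
                 _ = Etow (k+1) := rfl

lemma Etow_lt_succ (k : ℕ) : Etow k < Etow (k+1) := by
  have := Real.add_one_le_exp (Etow k)
  have : Etow k + 1 ≤ Etow (k+1) := this
  linarith

lemma Etow_mono : Monotone Etow := monotone_nat_of_le_succ (fun k => (Etow_lt_succ k).le)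

lemma one_le_iterLog {k : ℕ} {x : ℝ} (h : Etow k ≤ x) : 1 ≤ Real.log^[k] x := by
  induction k generalizing x with
  | zero => simpa [Etow] using h
  | succ k ih =>
    rw [Function.iterate_succ_apply]
    apply ih
    have hx : Real.exp (Etow k) ≤ x := h
    calc Etow k = Real.log (Real.exp (Etow k)) := (Real.log_exp _).symm
    _ ≤ Real.log x := Real.log_le_log (Real.exp_pos _) hx

lemma iterLog_le_iterLog {k : ℕ} {x y : ℝ} (hx : Etow k ≤ x) (hxy : x ≤ y) :
    Real.log^[k] x ≤ Real.log^[k] y := by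
  induction k generalizing x y with
  | zero => simpa using hxy
  | succ k ih =>
    rw [Function.iterate_succ_apply, Function.iterate_succ_apply]
    have hx' : Real.exp (Etow k) ≤ x := hx
    have h1 : Etow k ≤ Real.log x := by
      calc Etow k = Real.log (Real.exp (Etow k)) := (Real.log_exp _).symm
      _ ≤ Real.log x := Real.log_le_log (Real.exp_pos _) hx'
    exact ih h1 (Real.log_le_log (lt_of_lt_of_le (Real.exp_pos _) hx') hxy)

lemma tendsto_iterLog (k : ℕ) : Tendsto (Real.log^[k]) atTop atTop := by
  induction k with
  | zero => simpa using tendsto_id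
  | succ k ih =>
    rw [Function.iterate_succ]
    exact ih.comp Real.tendsto_log_atTop

noncomputable def Fk (k : ℕ) (x : ℝ) : ℝ := x * ∏ j ∈ Finset.Icc 1 k, Real.log^[j] x

lemma one_le_Fk_factors {k : ℕ} {x : ℝ} (h : Etow k ≤ x) {j : ℕ} (hj : j ∈ Finset.Icc 1 k) :
    1 ≤ Real.log^[j] x :=
  one_le_iterLog ((Etow_mono (Finset.mem_Icc.mp hj).2).trans h)

lemma Fk_pos {k : ℕ} {x : ℝ} (h : Etow k ≤ x) : 0 < Fk k x := by
  have hx : (0:ℝ) < x := lt_of_lt_of_le (by linarith [one_le_Etow k]) le_rfl |>.trans_le h |>.trans_le le_rfl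
  refine mul_pos (lt_of_lt_of_le one_pos ((one_le_Etow k).trans h)) ?_
  exact Finset.prod_pos fun j hj => lt_of_lt_of_le one_pos (one_le_Fk_factors h hj)

lemma Fk_mono {k : ℕ} {x y : ℝ} (hx : Etow k ≤ x) (hxy : x ≤ y) : Fk k x ≤ Fk k y := by
  have h1 : (0:ℝ) ≤ x := le_trans (by linarith [one_le_Etow k]) hx
  refine mul_le_mul hxy ?_ ?_ (le_trans h1 hxy)
  · exact Finset.prod_le_prod (fun j hj => le_trans zero_le_one (one_le_Fk_factors hx hj))
      (fun j hj => iterLog_le_iterLog ((Etow_mono (Finset.mem_Icc.mp hj).2).trans hx) hxy)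
  · exact Finset.prod_nonneg fun j hj => le_trans zero_le_one (one_le_Fk_factors hx hj)

lemma prod_range_eq_Fk (k : ℕ) (x : ℝ) :
    ∏ j ∈ Finset.range (k+1), Real.log^[j] x = Fk k x := by
  rw [Finset.range_eq_Ico, Finset.prod_eq_prod_Ico_succ_bot (Nat.succ_pos k), Nat.succ_eq_add_one, Finset.Ico_add_one_right_eq_Icc]
  simp [Fk]

lemma hasDerivAt_iterLog (k : ℕ) (x : ℝ) (hx : ∀ j, j ≤ k → 0 < Real.log^[j] x) :
    HasDerivAt (Real.log^[k+1]) (Fk k x)⁻¹ x := by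
  rw [← prod_range_eq_Fk]
  induction k with
  | zero => simpa using Real.hasDerivAt_log (ne_of_gt (hx 0 le_rfl))
  | succ k ih =>
    have h1 := ih (fun j hj => hx j (hj.trans (Nat.le_succ k)))
    have h2 : HasDerivAt Real.log (Real.log^[k+1] x)⁻¹ (Real.log^[k+1] x) :=
      Real.hasDerivAt_log (ne_of_gt (hx (k+1) le_rfl))
    have h3 := h2.comp x h1
    rw [show Real.log^[k+1+1] = Real.log ∘ Real.log^[k+1] from Function.iterate_succ' _ _]
    rw [Finset.prod_range_succ, mul_inv, mul_comm]
    exact h3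

lemma pos_iterLog_of_le {k : ℕ} {x : ℝ} (h : Etow k ≤ x) {j : ℕ} (hj : j ≤ k) :
    0 < Real.log^[j] x :=
  lt_of_lt_of_le one_pos (one_le_iterLog ((Etow_mono hj).trans h))

/-- MVT consequence: increments of the iterated log are bounded by `(Fk k x)⁻¹`. -/
lemma iterLog_succ_sub_le (k : ℕ) {x : ℝ} (hx : Etow k ≤ x) :
    Real.log^[k+1] (x+1) - Real.log^[k+1] x ≤ (Fk k x)⁻¹ := by
  have hlt : x < x + 1 := by linarith
  have hderiv : ∀ y ∈ Set.Icc x (x+1), HasDerivAt (Real.log^[k+1]) (Fk k y)⁻¹ y := by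
    intro y hy
    exact hasDerivAt_iterLog k y (fun j hj => pos_iterLog_of_le (le_trans hx hy.1) hj)
  have hcont : ContinuousOn (Real.log^[k+1]) (Set.Icc x (x+1)) :=
    fun y hy => ((hderiv y hy).continuousAt).continuousWithinAt
  obtain ⟨c, hc, hceq⟩ := exists_hasDerivAt_eq_slope (Real.log^[k+1]) (fun y => (Fk k y)⁻¹)
    hlt hcont (fun y hy => hderiv y ⟨hy.1.le, hy.2.le⟩)
  have hslope : Real.log^[k+1] (x+1) - Real.log^[k+1] x = (Fk k c)⁻¹ := by
    rw [hceq]; field_simp; ring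
  rw [hslope]
  exact inv_anti₀ (Fk_pos hx) (Fk_mono hx hc.1.le)

lemma sum_Ico_telescope (g : ℕ → ℝ) {N m : ℕ} (h : N ≤ m) :
    ∑ i ∈ Finset.Ico N m, (g i - g (i+1)) = g N - g m := by
  have h1 := Finset.sum_range_sub' g m
  have h2 := Finset.sum_range_sub' g N
  rw [Finset.range_eq_Ico] at h1 h2
  rw [← Finset.sum_Ico_consecutive (fun i => g i - g (i+1)) (Nat.zero_le N) h] at h1
  linarith

/-- If `∑ a n` is a convergent positive series, then for each `k ≥ 1` the
sequence `n * (log n) * (log log n) * ⋯ * (log^[k] n) * a n` converges in lower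
density to `0`. -/
theorem salat_toma_iterated_log (a : ℕ → ℝ) (ha : ∀ n, 0 < a n)
    (hsum : Summable a) :
    ∀ k : ℕ, 1 ≤ k → ∀ ε > (0 : ℝ),
      liminf
        (fun n : ℕ =>
          (((Finset.Icc 1 n).filter
            (fun m : ℕ =>
              ε ≤ (m : ℝ) * (∏ j ∈ Finset.Icc 1 k, Real.log^[j] (m : ℝ)) * a m)).card : ℝ) / n)
        atTop = 0 := by
  intro k hk ε hε
  classical
  set u : ℕ → ℝ := fun n : ℕ =>
      (((Finset.Icc 1 n).filter
        (fun m : ℕ =>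
          ε ≤ (m : ℝ) * (∏ j ∈ Finset.Icc 1 k, Real.log^[j] (m : ℝ)) * a m)).card : ℝ) / n
    with hu
  have hu0 : ∀ n, 0 ≤ u n := fun n => div_nonneg (Nat.cast_nonneg _) (Nat.cast_nonneg _)
  have hu1 : ∀ n, u n ≤ 1 := by
    intro n
    rcases Nat.eq_zero_or_pos n with h | h
    · simp [hu, h]
    · rw [hu]
      apply div_le_one_of_le₀ _ (Nat.cast_nonneg _)
      have h1 := Finset.card_filter_le (Finset.Icc 1 n)
        (fun m : ℕ => ε ≤ (m : ℝ) * (∏ j ∈ Finset.Icc 1 k, Real.log^[j] (m : ℝ)) * a m)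
      have h2 : (Finset.Icc 1 n).card = n := by simp
      exact_mod_cast h1.trans_eq h2
  have hbdd : IsBoundedUnder (· ≥ ·) atTop u := isBoundedUnder_of ⟨0, fun n => hu0 n⟩
  have hcobdd : IsCoboundedUnder (· ≥ ·) atTop u :=
    IsBoundedUnder.isCoboundedUnder_ge (isBoundedUnder_of ⟨1, fun n => hu1 n⟩)
  refine le_antisymm ?_ (le_liminf_of_le hcobdd (Eventually.of_forall hu0))
  by_contra hpos
  push_neg at hpos
  set L := liminf u atTop with hL
  set δ := L / 2 with hδdef
  have hδ : 0 < δ := by positivity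
  have hev : ∀ᶠ n in atTop, δ < u n :=
    eventually_lt_of_lt_liminf (by rw [← hL]; linarith) hbdd
  obtain ⟨N₁, hN₁⟩ := eventually_atTop.mp hev
  set N : ℕ := max (max N₁ 1) (⌈Etow k⌉₊ + 1) with hN
  have hN1 : 1 ≤ N := le_trans (le_max_right N₁ 1) (le_max_left _ _)
  have hNE : ∀ i : ℕ, N ≤ i → Etow k ≤ (i : ℝ) := by
    intro i hi
    have h1 : (⌈Etow k⌉₊ : ℝ) ≤ i := by
      exact_mod_cast le_trans (Nat.le_succ _) (le_trans (le_max_right _ _) hi)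
    exact (Nat.le_ceil _).trans h1
  -- the indicator function
  set c : ℕ → ℝ := fun m =>
    if ε ≤ (m : ℝ) * (∏ j ∈ Finset.Icc 1 k, Real.log^[j] (m : ℝ)) * a m then 1 else 0 with hc
  have hc01 : ∀ m, 0 ≤ c m ∧ c m ≤ 1 := by
    intro m; rw [hc]; dsimp only; split <;> norm_num
  have hc0 : c 0 = 0 := by
    rw [hc]; dsimp only
    rw [if_neg]
    push_cast
    rw [zero_mul, zero_mul]
    exact not_le.mpr hε
  have hcard : ∀ n : ℕ,
      (((Finset.Icc 1 n).filter
        (fun m : ℕ =>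
          ε ≤ (m : ℝ) * (∏ j ∈ Finset.Icc 1 k, Real.log^[j] (m : ℝ)) * a m)).card : ℝ)
        = ∑ m ∈ Finset.range (n+1), c m := by
    intro n
    rw [Finset.natCast_card_filter]
    rw [Finset.range_eq_Ico, Finset.sum_eq_sum_Ico_succ_bot n.succ_pos, hc0, zero_add,
      Nat.succ_eq_add_one, Finset.Ico_add_one_right_eq_Icc]
  -- counting lower bound
  have hcount : ∀ i : ℕ, N ≤ i → δ * i ≤ ∑ m ∈ Finset.range (i+1), c m := by
    intro i hi
    have h1 : δ < u i := hN₁ i (le_trans (le_trans (le_max_left N₁ 1) (le_max_left _ _)) hi)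
    have hi0 : (0:ℝ) < i := by
      have : 1 ≤ i := le_trans hN1 hi
      exact_mod_cast this
    rw [hu] at h1
    have := (lt_div_iff₀ hi0).mp h1
    rw [hcard i] at this
    exact this.le
  -- the weights
  set b : ℕ → ℝ := fun i => (Fk k (i:ℝ))⁻¹ with hb
  have hbpos : ∀ i : ℕ, N ≤ i → 0 < b i := fun i hi => inv_pos.mpr (Fk_pos (hNE i hi))
  have hbmono : ∀ i : ℕ, N ≤ i → b (i+1) ≤ b i := by
    intro i hi
    apply inv_anti₀ (Fk_pos (hNE i hi))
    exact Fk_mono (hNE i hi) (by push_cast; linarith)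
  have hbg : ∀ i : ℕ, N ≤ i →
      Real.log^[k+1] ((i:ℝ)+1) - Real.log^[k+1] (i:ℝ) ≤ b i := fun i hi =>
    iterLog_succ_sub_le k (hNE i hi)
  -- upper bound for the weighted sums
  have hupper : ∀ M : ℕ, ∑ i ∈ Finset.range M, b i * c i ≤ (∑' n, a n) / ε := by
    intro M
    have hpt : ∀ i : ℕ, b i * c i ≤ a i / ε := by
      intro i
      rw [hc, hb]; dsimp only
      split
      · rename_i hcond
        rw [mul_one]
        have hFk : ε / a i ≤ Fk k (i:ℝ) := by
          rw [div_le_iff₀ (ha i)]; exact hcond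
        have h2 : (Fk k (i:ℝ))⁻¹ ≤ (ε / a i)⁻¹ := inv_anti₀ (div_pos hε (ha i)) hFk
        rwa [inv_div] at h2
      · rw [mul_zero]; exact div_nonneg (ha i).le hε.le
    calc ∑ i ∈ Finset.range M, b i * c i ≤ ∑ i ∈ Finset.range M, a i / ε :=
          Finset.sum_le_sum fun i _ => hpt i
    _ = (∑ i ∈ Finset.range M, a i) / ε := by rw [Finset.sum_div]
    _ ≤ (∑' n, a n) / ε := by
        gcongr
        exact Summable.sum_le_tsum _ (fun i _ => (ha i).le) hsum
  set S := (∑' n, a n) / ε with hS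
  set K₀ : ℝ := ∑ i ∈ Finset.range N, |b (i+1) - b i| * (N:ℝ) with hK₀
  set g : ℕ → ℝ := fun i : ℕ => Real.log^[k+1] (i:ℝ) with hg
  have hCnn : ∀ n : ℕ, (0:ℝ) ≤ ∑ m ∈ Finset.range n, c m :=
    fun n => Finset.sum_nonneg fun m _ => (hc01 m).1
  have hCle : ∀ n : ℕ, ∑ m ∈ Finset.range n, c m ≤ (n:ℝ) := by
    intro n
    calc ∑ m ∈ Finset.range n, c m ≤ ∑ m ∈ Finset.range n, (1:ℝ) :=
          Finset.sum_le_sum fun m _ => (hc01 m).2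
    _ = n := by simp
  have key : ∀ M : ℕ, N + 2 ≤ M →
      δ * (g M - g (N+1)) ≤ S + K₀ - δ * ((N:ℝ) * b N) := by
    intro M hM
    have hM1 : 1 ≤ M := by omega
    have hNM : N ≤ M - 1 := by omega
    have hMsub : M - 1 + 1 = M := Nat.sub_add_cancel hM1
    have habel := Finset.sum_range_by_parts b c M
    simp only [smul_eq_mul] at habel
    have hsplit : ∑ i ∈ Finset.range (M-1), (b (i+1) - b i) * ∑ j ∈ Finset.range (i+1), c j
        = ∑ i ∈ Finset.Ico 0 N, (b (i+1) - b i) * ∑ j ∈ Finset.range (i+1), c j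
          + ∑ i ∈ Finset.Ico N (M-1), (b (i+1) - b i) * ∑ j ∈ Finset.range (i+1), c j := by
      rw [Finset.range_eq_Ico, ← Finset.sum_Ico_consecutive _ (Nat.zero_le N) hNM]
    have hP1 : ∑ i ∈ Finset.Ico 0 N, (b (i+1) - b i) * ∑ j ∈ Finset.range (i+1), c j ≤ K₀ := by
      rw [hK₀, show Finset.range N = Finset.Ico 0 N from Finset.range_eq_Ico N]
      apply Finset.sum_le_sum
      intro i hi
      have hiN : i + 1 ≤ N := (Finset.mem_Ico.mp hi).2
      have h1 : ∑ j ∈ Finset.range (i+1), c j ≤ (N:ℝ) :=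
        (hCle (i+1)).trans (by exact_mod_cast hiN)
      calc (b (i+1) - b i) * ∑ j ∈ Finset.range (i+1), c j
          ≤ |b (i+1) - b i| * ∑ j ∈ Finset.range (i+1), c j :=
            mul_le_mul_of_nonneg_right (le_abs_self _) (hCnn _)
      _ ≤ |b (i+1) - b i| * (N:ℝ) := mul_le_mul_of_nonneg_left h1 (abs_nonneg _)
    have hT : ∑ i ∈ Finset.Ico N (M-1), ((i:ℝ) * b i - ((i+1 : ℕ) : ℝ) * b (i+1))
        = (N:ℝ) * b N - ((M-1 : ℕ) : ℝ) * b (M-1) :=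
      sum_Ico_telescope (fun i : ℕ => (i:ℝ) * b i) hNM
    have hP2 : ∑ i ∈ Finset.Ico N (M-1), (b (i+1) - b i) * ∑ j ∈ Finset.range (i+1), c j
        ≤ δ * (((M-1 : ℕ) : ℝ) * b (M-1)) - δ * ((N:ℝ) * b N)
          - δ * ∑ i ∈ Finset.Ico N (M-1), b (i+1) := by
      have step1 : ∀ i ∈ Finset.Ico N (M-1),
          (b (i+1) - b i) * ∑ j ∈ Finset.range (i+1), c j ≤ (b (i+1) - b i) * (δ * (i:ℝ)) := by
        intro i hi
        have hiN : N ≤ i := (Finset.mem_Ico.mp hi).1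
        exact mul_le_mul_of_nonpos_left (hcount i hiN) (by linarith [hbmono i hiN])
      have expand : ∀ i : ℕ, (b (i+1) - b i) * (δ * (i:ℝ))
          = -δ * (((i:ℝ) * b i - ((i+1 : ℕ) : ℝ) * b (i+1)) + b (i+1)) := by
        intro i; push_cast; ring
      calc ∑ i ∈ Finset.Ico N (M-1), (b (i+1) - b i) * ∑ j ∈ Finset.range (i+1), c j
          ≤ ∑ i ∈ Finset.Ico N (M-1), (b (i+1) - b i) * (δ * (i:ℝ)) := Finset.sum_le_sum step1
      _ = δ * (((M-1 : ℕ) : ℝ) * b (M-1)) - δ * ((N:ℝ) * b N)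
          - δ * ∑ i ∈ Finset.Ico N (M-1), b (i+1) := by
          rw [Finset.sum_congr rfl (fun i _ => expand i), ← Finset.mul_sum,
            Finset.sum_add_distrib, hT]
          ring
    have hYlow : δ * (((M-1 : ℕ) : ℝ) * b (M-1)) ≤ b (M-1) * ∑ j ∈ Finset.range M, c j := by
      have h5 := hcount (M-1) hNM
      rw [hMsub] at h5
      have hb0 := (hbpos (M-1) hNM).le
      calc δ * (((M-1 : ℕ) : ℝ) * b (M-1)) = b (M-1) * (δ * ((M-1 : ℕ) : ℝ)) := by ring
      _ ≤ b (M-1) * ∑ j ∈ Finset.range M, c j := mul_le_mul_of_nonneg_left h5 hb0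
    have hSb : g M - g (N+1) ≤ ∑ i ∈ Finset.Ico N (M-1), b (i+1) := by
      have htel2 : ∑ i ∈ Finset.Ico N (M-1), (-(g (i+1)) - -(g (i+1+1)))
          = -(g (N+1)) - -(g (M-1+1)) :=
        sum_Ico_telescope (fun i : ℕ => -(g (i+1))) hNM
      rw [hMsub] at htel2
      have hstep : ∀ i ∈ Finset.Ico N (M-1), -(g (i+1)) - -(g (i+1+1)) ≤ b (i+1) := by
        intro i hi
        have hiN : N ≤ i+1 := le_trans (Finset.mem_Ico.mp hi).1 (Nat.le_succ i)
        have h6 := hbg (i+1) hiN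
        rw [hg]
        dsimp only
        push_cast at h6 ⊢
        linarith
      calc g M - g (N+1)
          = ∑ i ∈ Finset.Ico N (M-1), (-(g (i+1)) - -(g (i+1+1))) := by rw [htel2]; ring
      _ ≤ ∑ i ∈ Finset.Ico N (M-1), b (i+1) := Finset.sum_le_sum hstep
    have hX := hupper M
    have hδSb : δ * (g M - g (N+1)) ≤ δ * ∑ i ∈ Finset.Ico N (M-1), b (i+1) :=
      mul_le_mul_of_nonneg_left hSb hδ.le
    linarith [habel, hsplit, hP1, hP2, hYlow, hδSb, hX]
  have hg_tendsto : Tendsto g atTop atTop := by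
    rw [hg]
    exact (tendsto_iterLog (k+1)).comp tendsto_natCast_atTop_atTop
  set R := S + K₀ - δ * ((N:ℝ) * b N) with hR
  have hev2 : ∀ᶠ M in atTop, R/δ + g (N+1) + 1 ≤ g M := hg_tendsto.eventually_ge_atTop _
  obtain ⟨M, hM2, hM3⟩ := ((eventually_ge_atTop (N+2)).and hev2).exists
  have hkey := key M hM2
  have h7 : R/δ + 1 ≤ g M - g (N+1) := by linarith
  have h8 : δ * (R/δ + 1) ≤ δ * (g M - g (N+1)) := mul_le_mul_of_nonneg_left h7 hδ.le
  have h9 : δ * (R/δ + 1) = R + δ := by field_simp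
  linarith
end

section
/- Let S be an infinite set of positive integers and let (aₙ)ₙ≥1 be a sequence of positive real numbers whose restriction to S is nonincreasing (i.e., aₘ ≥ aₙ whenever m, n ∈ S and m ≤ n). If ∑_{n∈S} aₙ < ∞ and inf{ n·aₙ : n ∈ S } > 0, then S has zero density. -/
open Filter Topology

open scoped Classical

/-- If `S` is an infinite set of positive integers, `(a n)` is a sequence of
positive reals whose restriction to `S` is nonincreasing, `∑_{n ∈ S} a n < ∞`
and `inf { n * a n : n ∈ S } > 0`, then `S` has zero density. -/
theorem zero_density_of_summable_subseries (a : ℕ → ℝ) (S : Set ℕ)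
    (hSinf : S.Infinite) (hS : ∀ n ∈ S, 1 ≤ n) (ha : ∀ n, 0 < a n)
    (hanti : ∀ m ∈ S, ∀ n ∈ S, m ≤ n → a n ≤ a m)
    (hsum : Summable (fun n : S => a n))
    (hinf : ∃ c > (0 : ℝ), ∀ n ∈ S, c ≤ (n : ℝ) * a n) :
    Tendsto
      (fun n : ℕ => (((Finset.Icc 1 n).filter (fun k : ℕ => k ∈ S)).card : ℝ) / n)
      atTop (𝓝 0) := by
  have hb : Summable (S.indicator a) := by
    rw [← summable_subtype_iff_indicator]; exact hsum
  obtain ⟨c, hc, hca⟩ := hinf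
  rw [Metric.tendsto_atTop]
  intro ε hε
  have hδ : (0:ℝ) < ε * c / 2 := by positivity
  obtain ⟨s, hs⟩ := summable_iff_vanishing.mp hb (Metric.ball 0 (ε*c/2))
    (Metric.ball_mem_nhds 0 hδ)
  set m := s.sup id with hm
  refine ⟨max (m+1) (⌈(2*(m:ℝ))/ε⌉₊ + 1), fun n hn => ?_⟩
  have hn1 : m + 1 ≤ n := le_trans (le_max_left _ _) hn
  have hn2 : ⌈(2*(m:ℝ))/ε⌉₊ + 1 ≤ n := le_trans (le_max_right _ _) hn
  have hnpos : 0 < n := by omega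
  have hnR : (0:ℝ) < n := by exact_mod_cast hnpos
  set T := (Finset.Ioc m n).filter (fun k : ℕ => k ∈ S) with hT
  have hdisj : Disjoint T s := by
    rw [Finset.disjoint_left]
    intro k hk hks
    have h1 : m < k := (Finset.mem_Ioc.mp (Finset.mem_filter.mp hk).1).1
    have h2 : k ≤ m := Finset.le_sup (f := id) hks
    omega
  have hsumT : ∑ k ∈ T, S.indicator a k < ε*c/2 := by
    have h := hs T hdisj
    rw [Metric.mem_ball, dist_zero_right] at h
    exact lt_of_le_of_lt (le_abs_self _) h
  have hlow : (T.card : ℝ) * (c / n) ≤ ∑ k ∈ T, S.indicator a k := by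
    rw [← nsmul_eq_mul]
    apply Finset.card_nsmul_le_sum
    intro k hk
    obtain ⟨hk1, hk2⟩ := Finset.mem_filter.mp hk
    obtain ⟨hkm, hkn⟩ := Finset.mem_Ioc.mp hk1
    rw [Set.indicator_of_mem hk2]
    have hk1' : 1 ≤ k := hS k hk2
    have hkR : (0:ℝ) < k := by exact_mod_cast hk1'
    have h1 : c / n ≤ c / k := by
      apply div_le_div_of_nonneg_left hc.le hkR
      exact_mod_cast hkn
    have h2 : c / k ≤ a k := by
      rw [div_le_iff₀ hkR]
      have := hca k hk2
      linarith [this, mul_comm (a k) (k:ℝ)]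
    linarith
  have hcard : ((Finset.Icc 1 n).filter (fun k : ℕ => k ∈ S)).card ≤ m + T.card := by
    have hsub : (Finset.Icc 1 n).filter (fun k : ℕ => k ∈ S) ⊆
        (Finset.Icc 1 m).filter (fun k : ℕ => k ∈ S) ∪ T := by
      intro k hk
      obtain ⟨hk1, hk2⟩ := Finset.mem_filter.mp hk
      obtain ⟨h1, h2⟩ := Finset.mem_Icc.mp hk1
      rcases le_or_gt k m with h | h
      · exact Finset.mem_union_left _ (Finset.mem_filter.mpr ⟨Finset.mem_Icc.mpr ⟨h1, h⟩, hk2⟩)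
      · exact Finset.mem_union_right _ (Finset.mem_filter.mpr ⟨Finset.mem_Ioc.mpr ⟨h, h2⟩, hk2⟩)
    calc ((Finset.Icc 1 n).filter (fun k : ℕ => k ∈ S)).card
        ≤ ((Finset.Icc 1 m).filter (fun k : ℕ => k ∈ S) ∪ T).card := Finset.card_le_card hsub
      _ ≤ ((Finset.Icc 1 m).filter (fun k : ℕ => k ∈ S)).card + T.card :=
          Finset.card_union_le _ _
      _ ≤ m + T.card := by
          gcongr
          calc ((Finset.Icc 1 m).filter (fun k : ℕ => k ∈ S)).card
              ≤ (Finset.Icc 1 m).card := Finset.card_filter_le _ _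
            _ ≤ m := by simp [Nat.card_Icc]
  have hTn : (T.card : ℝ) / n < ε / 2 := by
    have h1 : (T.card : ℝ) / n * c < ε / 2 * c := by
      have : (T.card : ℝ) * (c / n) = (T.card : ℝ) / n * c := by ring
      rw [this] at hlow
      calc (T.card : ℝ) / n * c ≤ ∑ k ∈ T, S.indicator a k := hlow
        _ < ε * c / 2 := hsumT
        _ = ε / 2 * c := by ring
    exact lt_of_mul_lt_mul_right h1 hc.le
  have hmn : (m : ℝ) / n < ε / 2 := by
    have h1 : (2*(m:ℝ))/ε < n := by
      have h2 : (2*(m:ℝ))/ε ≤ ⌈(2*(m:ℝ))/ε⌉₊ := Nat.le_ceil _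
      have h3 : (⌈(2*(m:ℝ))/ε⌉₊ : ℝ) < n := by exact_mod_cast Nat.lt_of_succ_le hn2
      linarith
    rw [div_lt_iff₀ hε] at h1
    rw [div_lt_iff₀ hnR]
    linarith
  rw [Real.dist_eq, sub_zero, abs_of_nonneg (by positivity)]
  have hcR : (((Finset.Icc 1 n).filter (fun k : ℕ => k ∈ S)).card : ℝ) ≤ m + T.card := by
    exact_mod_cast hcard
  calc (((Finset.Icc 1 n).filter (fun k : ℕ => k ∈ S)).card : ℝ) / n
      ≤ ((m : ℝ) + T.card) / n := by gcongr
    _ = (m : ℝ) / n + (T.card : ℝ) / n := add_div _ _ _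
    _ < ε / 2 + ε / 2 := by linarith
    _ = ε := by ring
end

section
/- Let (bₙ)ₙ≥1 be a sequence of positive real numbers such that (n·bₙ)ₙ is nonincreasing and inf_{n} (n·ln n)·bₙ > 0. Then every set S of positive integers for which ∑_{n∈S} bₙ < ∞ has zero harmonic density. -/
open Filter Topology

open scoped Classical

/-- If `(b n)` is a sequence of positive reals such that `(n * b n)` is
nonincreasing (for `n ≥ 1`) and `inf_n (n * log n) * b n > 0`, then every set
`S` of positive integers with `∑_{n ∈ S} b n < ∞` has zero harmonic density. -/
theorem zero_harmonic_density_of_summable_subseries (b : ℕ → ℝ)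
    (hb : ∀ n, 0 < b n)
    (hanti : ∀ m n : ℕ, 1 ≤ m → m ≤ n → (n : ℝ) * b n ≤ (m : ℝ) * b m)
    (hinf : ∃ c > (0 : ℝ), ∀ n : ℕ, 2 ≤ n → c ≤ ((n : ℝ) * Real.log n) * b n) :
    ∀ S : Set ℕ, (∀ n ∈ S, 1 ≤ n) → Summable (fun n : S => b n) →
      Tendsto
        (fun n : ℕ =>
          (1 / Real.log n) * ∑ k ∈ Finset.Icc 1 n, (if k ∈ S then ((k : ℝ))⁻¹ else 0))
        atTop (𝓝 0) := by
  obtain ⟨c, hc, hcb⟩ := hinf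
  intro S hS hsum
  have hgsum : Summable (Set.indicator S b) := by
    rw [← summable_subtype_iff_indicator]
    exact hsum
  rw [NormedAddCommGroup.tendsto_nhds_zero]
  intro ε hε
  have hε' : 0 < c * ε / 2 := by positivity
  obtain ⟨s0, hs0⟩ := summable_iff_vanishing.mp hgsum (Metric.ball 0 (c * ε / 2))
    (Metric.ball_mem_nhds 0 hε')
  set m : ℕ := s0.sup id + 1 with hm
  set A : ℝ := ∑ k ∈ Finset.Icc 1 m, ((k : ℝ))⁻¹ with hA
  have hA0 : 0 ≤ A := Finset.sum_nonneg fun k _ => by positivity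
  have hlog : Tendsto (fun n : ℕ => Real.log n) atTop atTop :=
    Real.tendsto_log_atTop.comp tendsto_natCast_atTop_atTop
  filter_upwards [hlog.eventually_gt_atTop (max 1 (2 * A / ε)),
      eventually_ge_atTop m, eventually_ge_atTop 2] with n hlogn hmn h2n
  have hlog1 : (1 : ℝ) < Real.log n := lt_of_le_of_lt (le_max_left _ _) hlogn
  have hlogpos : (0 : ℝ) < Real.log n := by linarith
  have hsplit : Finset.Icc 1 n = Finset.Icc 1 m ∪ Finset.Ioc m n := by
    ext a
    simp only [Finset.mem_Icc, Finset.mem_union, Finset.mem_Ioc]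
    omega
  have hdisj : Disjoint (Finset.Icc 1 m) (Finset.Ioc m n) := by
    rw [Finset.disjoint_left]
    intro a ha hb'
    rw [Finset.mem_Icc] at ha
    rw [Finset.mem_Ioc] at hb'
    omega
  have h1 : ∑ k ∈ Finset.Icc 1 m, (if k ∈ S then ((k : ℝ))⁻¹ else 0) ≤ A := by
    apply Finset.sum_le_sum
    intro k _
    split_ifs
    · exact le_rfl
    · exact inv_nonneg.mpr (by positivity)
  have h2 : ∑ k ∈ Finset.Ioc m n, (if k ∈ S then ((k : ℝ))⁻¹ else 0)
      ≤ (Real.log n / c) * ∑ k ∈ Finset.Ioc m n, Set.indicator S b k := by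
    rw [Finset.mul_sum]
    apply Finset.sum_le_sum
    intro k hk
    rw [Finset.mem_Ioc] at hk
    rw [Set.indicator_apply]
    split_ifs with hkS
    · have hk1 : 1 ≤ k := by omega
      have hk0 : (0 : ℝ) < k := by exact_mod_cast Nat.lt_of_lt_of_le Nat.zero_lt_one hk1
      have hbk : (n : ℝ) * b n ≤ (k : ℝ) * b k := hanti k n hk1 hk.2
      have key : c ≤ Real.log n * ((k : ℝ) * b k) := by
        calc c ≤ ((n : ℝ) * Real.log n) * b n := hcb n h2n
          _ = Real.log n * ((n : ℝ) * b n) := by ring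
          _ ≤ Real.log n * ((k : ℝ) * b k) :=
              mul_le_mul_of_nonneg_left hbk hlogpos.le
      rw [div_mul_eq_mul_div, le_div_iff₀ hc, inv_mul_le_iff₀ hk0,
        show (k : ℝ) * (Real.log n * b k) = Real.log n * ((k : ℝ) * b k) by ring]
      exact key
    · simp
  have h3 : ∑ k ∈ Finset.Ioc m n, Set.indicator S b k < c * ε / 2 := by
    have hdisj2 : Disjoint (Finset.Ioc m n) s0 := by
      rw [Finset.disjoint_left]
      intro a ha hb'
      rw [Finset.mem_Ioc] at ha
      have := Finset.le_sup (f := id) hb'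
      simp only [id] at this
      omega
    have hmem := hs0 _ hdisj2
    rw [Metric.mem_ball, dist_zero_right, Real.norm_eq_abs] at hmem
    calc ∑ k ∈ Finset.Ioc m n, Set.indicator S b k
        ≤ |∑ k ∈ Finset.Ioc m n, Set.indicator S b k| := le_abs_self _
      _ < c * ε / 2 := hmem
  have hpos : (0 : ℝ) < Real.log n / c := by positivity
  have heq : (Real.log n / c) * (c * ε / 2) = Real.log n * (ε / 2) := by
    field_simp
  have h4 : (Real.log n / c) * ∑ k ∈ Finset.Ioc m n, Set.indicator S b k
      ≤ Real.log n * (ε / 2) := by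
    calc (Real.log n / c) * ∑ k ∈ Finset.Ioc m n, Set.indicator S b k
        ≤ (Real.log n / c) * (c * ε / 2) := mul_le_mul_of_nonneg_left h3.le hpos.le
      _ = Real.log n * (ε / 2) := heq
  have hfn : ∑ k ∈ Finset.Icc 1 n, (if k ∈ S then ((k : ℝ))⁻¹ else 0)
      ≤ A + Real.log n * (ε / 2) := by
    rw [hsplit, Finset.sum_union hdisj]
    linarith [h1, le_trans h2 h4]
  have hT0 : 0 ≤ ∑ k ∈ Finset.Icc 1 n, (if k ∈ S then ((k : ℝ))⁻¹ else 0) :=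
    Finset.sum_nonneg fun k _ => by
      split_ifs
      · exact inv_nonneg.mpr (by positivity)
      · exact le_rfl
  rw [Real.norm_eq_abs, abs_of_nonneg (mul_nonneg (by positivity) hT0),
    one_div, inv_mul_lt_iff₀ hlogpos]
  have hmax2 : 2 * A / ε < Real.log n := lt_of_le_of_lt (le_max_right _ _) hlogn
  rw [div_lt_iff₀ hε] at hmax2
  linarith [hfn]
end

section
/- If (aₙ)ₙ≥1 is a sequence of positive real numbers such that the series ∑ aₙ converges, then the sequence ((n·ln n)·aₙ)ₙ converges in harmonic density to 0. -/
open Filter Topology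

/-- If `∑ a n` is a convergent positive series, then `((n * log n) * a n)`
converges in harmonic density to `0`: for every `ε > 0`, the set of indices `k`
with `(k * log k) * a k ≥ ε` has zero harmonic density. -/
theorem salat_toma_harmonic (a : ℕ → ℝ) (ha : ∀ n, 0 < a n)
    (hsum : Summable a) :
    ∀ ε > (0 : ℝ),
      Tendsto
        (fun n : ℕ =>
          (1 / Real.log n) *
            ∑ k ∈ Finset.Icc 1 n,
              (if ε ≤ ((k : ℝ) * Real.log k) * a k then ((k : ℝ))⁻¹ else 0))
        atTop (𝓝 0) := by
  intro ε hε
  set f : ℕ → ℝ := fun k => if ε ≤ ((k : ℝ) * Real.log k) * a k then ((k : ℝ))⁻¹ else 0 with hf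
  set b : ℕ → ℝ := fun k =>
    if ε ≤ ((k : ℝ) * Real.log k) * a k then (((k : ℝ)) * Real.log k)⁻¹ else 0 with hbdef
  have hfnn : ∀ k, 0 ≤ f k := by
    intro k; simp only [hf]; split_ifs with h
    · positivity
    · exact le_refl 0
  have hbnn : ∀ k, 0 ≤ b k := by
    intro k; simp only [hbdef]; split_ifs with h
    · have ht : 0 < (k:ℝ) * Real.log k := by nlinarith [ha k]
      positivity
    · exact le_refl 0
  have hble : ∀ k, b k ≤ a k / ε := by
    intro k; simp only [hbdef]; split_ifs with h
    · have ht : 0 < (k:ℝ) * Real.log k := by nlinarith [ha k]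
      rw [inv_eq_one_div, div_le_div_iff₀ ht hε]
      nlinarith [ha k]
    · exact div_nonneg (ha k).le hε.le
  have hb : Summable b :=
    Summable.of_nonneg_of_le hbnn hble (hsum.div_const ε)
  have hb0 : b 0 = 0 := by
    simp only [hbdef]
    rw [if_neg]
    push_cast
    rw [Real.log_zero]
    simp
    linarith
  rw [NormedAddCommGroup.tendsto_nhds_zero]
  intro δ hδ
  -- choose tail cutoff
  obtain ⟨M, hM⟩ := Metric.tendsto_atTop.mp hb.hasSum.tendsto_sum_nat (δ/4) (by positivity)
  set m := M + 1 with hm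
  have htail : ∀ n : ℕ, ∑ k ∈ Finset.Ioc m n, b k < δ/4 := by
    intro n
    rcases le_or_gt n m with h | h
    · rw [Finset.Ioc_eq_empty (by omega)]
      simpa using by positivity
    · have hsplit := Finset.sum_Ioc_consecutive b (Nat.zero_le m) h.le
      have h1 : ∑ k ∈ Finset.Ioc 0 n, b k ≤ ∑' k, b k :=
        Summable.sum_le_tsum _ (fun i _ => hbnn i) hb
      have h2 : ∑ k ∈ Finset.Ioc 0 m, b k = ∑ k ∈ Finset.range (m+1), b k := by
        refine Finset.sum_subset ?_ ?_
        · intro x hx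
          simp only [Finset.mem_Ioc] at hx
          simp only [Finset.mem_range]
          omega
        · intro x hx hnx
          simp only [Finset.mem_Ioc, not_and, not_lt, not_le] at hnx
          have : x = 0 := by
            simp only [Finset.mem_range] at hx
            by_contra hc
            have h0 : 0 < x := Nat.pos_of_ne_zero hc
            have := hnx h0
            omega
          rw [this, hb0]
      have hM' := hM (m+1) (by omega)
      rw [Real.dist_eq, abs_lt] at hM'
      have : ∑ k ∈ Finset.Ioc m n, b k = ∑ k ∈ Finset.Ioc 0 n, b k - ∑ k ∈ Finset.Ioc 0 m, b k := by
        linarith [hsplit]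
      rw [this, h2]
      linarith [hM'.1]
  have hlog : Tendsto (fun n : ℕ => Real.log n) atTop atTop :=
    Real.tendsto_log_atTop.comp tendsto_natCast_atTop_atTop
  filter_upwards [hlog.eventually_gt_atTop (max 1 (2 * m / δ)),
    eventually_ge_atTop (m + 1)] with n hln hn
  have hL1 : 1 < Real.log n := lt_of_le_of_lt (le_max_left _ _) hln
  have hL2 : 2 * m / δ < Real.log n := lt_of_le_of_lt (le_max_right _ _) hln
  have hLpos : 0 < Real.log n := by linarith
  have hmn : m ≤ n := by omega
  -- split the sum
  have hicc : Finset.Icc 1 n = Finset.Ioc 0 n := by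
    exact Finset.Icc_add_one_left_eq_Ioc 0 _
  have hicc' : Finset.Icc 1 m = Finset.Ioc 0 m := by
    exact Finset.Icc_add_one_left_eq_Ioc 0 _
  have hsplit := Finset.sum_Ioc_consecutive f (Nat.zero_le m) hmn
  -- bound the first block
  have hS1 : ∑ k ∈ Finset.Ioc 0 m, f k ≤ (m : ℝ) := by
    calc ∑ k ∈ Finset.Ioc 0 m, f k ≤ ∑ k ∈ Finset.Ioc 0 m, (1:ℝ) := by
          refine Finset.sum_le_sum fun k hk => ?_
          simp only [Finset.mem_Ioc] at hk
          simp only [hf]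
          split_ifs with h
          · have : (1:ℝ) ≤ (k:ℝ) := by exact_mod_cast hk.1
            exact inv_le_one_of_one_le₀ this
          · norm_num
      _ = (m : ℝ) := by
          rw [Finset.sum_const, Nat.card_Ioc]
          simp
  -- bound the second block
  have hS2 : ∑ k ∈ Finset.Ioc m n, f k ≤ Real.log n * ∑ k ∈ Finset.Ioc m n, b k := by
    rw [Finset.mul_sum]
    refine Finset.sum_le_sum fun k hk => ?_
    simp only [Finset.mem_Ioc] at hk
    have hk2 : 2 ≤ k := by omega
    simp only [hf, hbdef]
    split_ifs with h
    · have hk1 : (1:ℝ) < (k:ℝ) := by exact_mod_cast (by omega : 1 < k)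
      have hlogk : 0 < Real.log k := Real.log_pos hk1
      have hkpos : (0:ℝ) < (k:ℝ) := by linarith
      have hlogle : Real.log k ≤ Real.log n :=
        Real.log_le_log (by positivity) (by exact_mod_cast hk.2)
      have hkne : (k:ℝ) ≠ 0 := ne_of_gt hkpos
      have hlkne : Real.log k ≠ 0 := ne_of_gt hlogk
      calc (k:ℝ)⁻¹ = Real.log k * ((k:ℝ) * Real.log k)⁻¹ := by
            field_simp
        _ ≤ Real.log n * ((k:ℝ) * Real.log k)⁻¹ :=
            mul_le_mul_of_nonneg_right hlogle (by positivity)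
    · simp
  have hS2' : Real.log n * ∑ k ∈ Finset.Ioc m n, b k ≤ Real.log n * (δ/4) :=
    mul_le_mul_of_nonneg_left (htail n).le hLpos.le
  have hSnn : 0 ≤ ∑ k ∈ Finset.Icc 1 n, f k :=
    Finset.sum_nonneg fun k _ => hfnn k
  have hStot : ∑ k ∈ Finset.Icc 1 n, f k ≤ (m:ℝ) + Real.log n * (δ/4) := by
    rw [hicc, ← hsplit]
    linarith
  have hmd : (m:ℝ) / Real.log n < δ/2 := by
    rw [div_lt_iff₀ hLpos]
    rw [div_lt_iff₀ hδ] at hL2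
    nlinarith
  rw [Real.norm_eq_abs, abs_of_nonneg (by positivity)]
  calc (1 / Real.log n) * ∑ k ∈ Finset.Icc 1 n, f k
      ≤ (1 / Real.log n) * ((m:ℝ) + Real.log n * (δ/4)) := by
        exact mul_le_mul_of_nonneg_left hStot (by positivity)
    _ = (m:ℝ) / Real.log n + δ/4 := by field_simp
    _ < δ := by linarith
end

section
/- If (aₙ)ₙ≥1 is a sequence of positive real numbers such that the series ∑ aₙ converges, and φ : ℕ → ℕ is a bijection, then the sequence (n·a_{φ(n)})ₙ converges in density to 0. -/
open Filter Topology

/-- If `∑ a n` is a convergent positive series and `φ : ℕ → ℕ` is a bijection,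
then `(n * a (φ n))` converges in density to `0`. -/
theorem salat_toma_rearrangement (a : ℕ → ℝ) (φ : ℕ → ℕ)
    (ha : ∀ n, 0 < a n) (hsum : Summable a) (hφ : Function.Bijective φ) :
    ∀ ε > (0 : ℝ),
      Tendsto
        (fun n : ℕ =>
          (((Finset.Icc 1 n).filter (fun k : ℕ => ε ≤ (k : ℝ) * a (φ k))).card : ℝ) / n)
        atTop (𝓝 0) := by
  intro ε hε
  rw [NormedAddCommGroup.tendsto_nhds_zero]
  intro δ hδ
  have htail : Tendsto (fun i => ∑' k, a (k + i)) atTop (𝓝 0) := tendsto_sum_nat_add a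
  obtain ⟨N, hN⟩ := (htail.eventually (gt_mem_nhds (by positivity : (0:ℝ) < ε * δ / 4))).exists
  obtain ⟨M, hM⟩ := exists_nat_gt (4 * N / δ)
  filter_upwards [eventually_ge_atTop (M + 1)] with n hn
  have hn1 : 1 ≤ n := le_trans (Nat.le_add_left 1 M) hn
  have hnR : (1:ℝ) ≤ n := by exact_mod_cast hn1
  have hnpos : (0:ℝ) < n := lt_of_lt_of_le one_pos hnR
  set T := (Finset.Icc 1 n).filter (fun k : ℕ => ε ≤ (k : ℝ) * a (φ k)) with hT
  set T1 := T.filter (fun k => φ k < N) with hT1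
  set T2 := T.filter (fun k => ¬ φ k < N) with hT2
  have hsplit : T1.card + T2.card = T.card :=
    Finset.card_filter_add_card_filter_not _
  -- bound on T1
  have hcard1 : T1.card ≤ N := by
    rw [← Finset.card_range N]
    apply Finset.card_le_card_of_injOn φ
    · intro k hk
      exact Finset.mem_range.2 (Finset.mem_filter.1 hk).2
    · intro x _ y _ h
      exact hφ.injective h
  -- bound on T2
  have hkey : ∀ k ∈ T2, ε / n ≤ a (φ k) := by
    intro k hk
    simp only [hT2, hT1, hT, Finset.mem_filter, Finset.mem_Icc] at hk
    obtain ⟨⟨⟨hk1, hk2⟩, hk3⟩, _⟩ := hk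
    have hkn : (k:ℝ) ≤ n := by exact_mod_cast hk2
    have : ε ≤ (n:ℝ) * a (φ k) :=
      hk3.trans (mul_le_mul_of_nonneg_right hkn (ha _).le)
    rw [div_le_iff₀ hnpos]
    linarith [this, mul_comm (n:ℝ) (a (φ k))]
  have hinj : Set.InjOn (fun k => φ k - N) T2 := by
    intro x hx y hy h
    have hx2 : N ≤ φ x := by
      have := Finset.mem_coe.1 hx
      simp only [hT2, Finset.mem_filter, not_lt] at this
      exact this.2
    have hy2 : N ≤ φ y := by
      have := Finset.mem_coe.1 hy
      simp only [hT2, Finset.mem_filter, not_lt] at this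
      exact this.2
    have h' : φ x - N = φ y - N := h
    exact hφ.injective (by omega)
  have hsum_eq : ∑ k ∈ T2, a (φ k) = ∑ j ∈ T2.image (fun k => φ k - N), a (j + N) := by
    rw [Finset.sum_image hinj]
    apply Finset.sum_congr rfl
    intro k hk
    simp only [hT2, Finset.mem_filter, not_lt] at hk
    rw [Nat.sub_add_cancel hk.2]
  have hsum_le : ∑ k ∈ T2, a (φ k) ≤ ∑' j, a (j + N) := by
    rw [hsum_eq]
    exact Summable.sum_le_tsum _ (fun i _ => (ha _).le)
      ((summable_nat_add_iff N).2 hsum)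
  have hlb : (T2.card : ℝ) * (ε / n) ≤ ∑ k ∈ T2, a (φ k) := by
    have := Finset.card_nsmul_le_sum T2 (fun k => a (φ k)) (ε / n) hkey
    simpa [nsmul_eq_mul] using this
  have hcard2 : (T2.card : ℝ) ≤ δ * n / 4 := by
    have h := hlb.trans (hsum_le.trans hN.le)
    rw [← mul_div_assoc, div_le_iff₀ hnpos] at h
    nlinarith
  have hcardT : (T.card : ℝ) ≤ N + δ * n / 4 := by
    have : (T.card : ℝ) = (T1.card : ℝ) + T2.card := by exact_mod_cast hsplit.symm
    have h1 : (T1.card : ℝ) ≤ N := by exact_mod_cast hcard1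
    linarith
  have hNn : (N : ℝ) / n < δ / 4 := by
    rw [div_lt_iff₀ hnpos]
    have hMn : (M:ℝ) + 1 ≤ n := by exact_mod_cast hn
    have : 4 * (N:ℝ) / δ < M := hM
    rw [div_lt_iff₀ hδ] at this
    nlinarith
  have hfin : (T.card : ℝ) / n < δ := by
    rw [div_lt_iff₀ hnpos]
    have : (N:ℝ) < δ / 4 * n := by rw [← div_lt_iff₀ hnpos] at *; linarith
    nlinarith
  have hnonneg : (0:ℝ) ≤ (T.card : ℝ) / n := by positivity
  rw [Real.norm_eq_abs, abs_of_nonneg hnonneg]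
  exact hfin
end
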